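/- arXiv:0805.3743 — 5 statements merged into one kernel-verified Lean document; each statement's English description precedes it below -/
import Mathlib

section
/- For every nonnegative integer n, the number of proper colored binary trees with n internal vertices equals \sum_{p=0}^{\lfloor n/2 \rfloor} (-1)^p (1/(n+1)) \binom{n+p}{p} \binom{2n-2p}{n-2p}. -/
/-- A complete binary tree: every internal vertex has exactly a left and a right child. -/
inductive BinTree : Type
  | leaf : BinTree
  | node : BinTree → BinTree → BinTree

namespace BinTree

/-- The number of internal vertices of a complete binary tree. -/
def internals : BinTree → ℕ
  | leaf => 0
  | node l r => internals l + internals r + 1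

/-- The subtree rooted at the vertex reached from the root by the given path,
where `false` means "go to the left child" and `true` means "go to the right child";
`none` if there is no such vertex. -/
def subtreeAt : BinTree → List Bool → Option BinTree
  | t, [] => some t
  | leaf, _ :: _ => none
  | node l _, false :: p => subtreeAt l p
  | node _ r, true :: p => subtreeAt r p

/-- The list of (the paths from the root to) all vertices of a complete binary tree. -/
def vertices : BinTree → List (List Bool)
  | leaf => [[]]
  | node l r =>
      [] :: ((vertices l).map (List.cons false) ++ (vertices r).map (List.cons true))

/-- The length of the maximal L-path starting at the root, i.e. the length of the
leftmost path of the tree. -/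
def leftLen : BinTree → ℕ
  | leaf => 0
  | node l _ => leftLen l + 1

/-- `p` is (the path from the root to) an *initial vertex* of `t`: it is a vertex of `t`
which is not the left child of its father (it is the root or a right child), so it is the
starting vertex of a maximal L-path. -/
def IsInitial (t : BinTree) (p : List Bool) : Prop :=
  (subtreeAt t p).isSome ∧ (p = [] ∨ p.getLast? = some true)

/-- The length `l(v)` of the associated maximal L-path of the vertex `v` at path `p`
(junk value `0` if `p` is not a vertex of `t`). -/
def pathLen (t : BinTree) (p : List Bool) : ℕ :=
  match subtreeAt t p with
  | some s => leftLen s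
  | none => 0

end BinTree

/-- A colored binary tree: a complete binary tree together with an assignment of a color
`c(v)` with `0 ≤ c(v) ≤ ⌊l(v)/2⌋` to each initial vertex `v` (vertices which are not
initial carry the junk color `0`). -/
structure ColoredBinTree : Type where
  /-- the underlying complete binary tree -/
  tree : BinTree
  /-- the color of each vertex (indexed by the path from the root) -/
  color : List Bool → ℕ
  color_le : ∀ p, BinTree.IsInitial tree p → color p ≤ BinTree.pathLen tree p / 2
  color_eq_zero : ∀ p, ¬ BinTree.IsInitial tree p → color p = 0

namespace ColoredBinTree

/-- The color number of a colored binary tree: the sum of the colors of its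
initial vertices. -/
def colorNum (B : ColoredBinTree) : ℕ :=
  ((B.tree.vertices).map B.color).sum

/-- The initial vertex at path `p` is *proper*: its color is `2k` and the length of its
associated maximal L-path is `4k` or `4k+1` for some nonnegative integer `k`. -/
def ProperAt (B : ColoredBinTree) (p : List Bool) : Prop :=
  ∃ k : ℕ, B.color p = 2 * k ∧
    (BinTree.pathLen B.tree p = 4 * k ∨ BinTree.pathLen B.tree p = 4 * k + 1)

/-- A colored binary tree is *proper* if all its initial vertices are proper. -/
def Proper (B : ColoredBinTree) : Prop :=
  ∀ p, BinTree.IsInitial B.tree p → B.ProperAt p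

end ColoredBinTree


namespace BinTree

/- ===== new material ===== -/

def NRGood (t : BinTree) : Prop := ∀ p, p ≠ [] → t.IsInitial p → t.pathLen p % 4 ≤ 1

def GoodT (t : BinTree) : Prop := ∀ p, t.IsInitial p → t.pathLen p % 4 ≤ 1

@[simp] lemma subtreeAt_nil (t : BinTree) : t.subtreeAt [] = some t := by cases t <;> rfl

@[simp] lemma subtreeAt_node_false (l r : BinTree) (q : List Bool) :
    (node l r).subtreeAt (false :: q) = l.subtreeAt q := rfl

@[simp] lemma subtreeAt_node_true (l r : BinTree) (q : List Bool) :
    (node l r).subtreeAt (true :: q) = r.subtreeAt q := rfl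

@[simp] lemma pathLen_nil (t : BinTree) : t.pathLen [] = t.leftLen := by
  cases t <;> rfl

@[simp] lemma pathLen_node_false (l r : BinTree) (q : List Bool) :
    (node l r).pathLen (false :: q) = l.pathLen q := rfl

@[simp] lemma pathLen_node_true (l r : BinTree) (q : List Bool) :
    (node l r).pathLen (true :: q) = r.pathLen q := rfl

lemma isInitial_nil (t : BinTree) : t.IsInitial [] := ⟨by simp, Or.inl rfl⟩

lemma not_isInitial_leaf (p : List Bool) (hp : p ≠ []) : ¬ (leaf.IsInitial p) := by
  intro h
  obtain ⟨h1, _⟩ := h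
  match p with
  | [] => exact hp rfl
  | a :: q => simp [subtreeAt] at h1

lemma getLast?_cons_of_ne_nil {a : Bool} {q : List Bool} (hq : q ≠ []) :
    (a :: q).getLast? = q.getLast? := by
  match q with
  | [] => exact absurd rfl hq
  | b :: q' => simp [List.getLast?_cons_cons]

lemma isInitial_node_false (l r : BinTree) (q : List Bool) :
    (node l r).IsInitial (false :: q) ↔ (q ≠ [] ∧ l.IsInitial q) := by
  constructor
  · rintro ⟨h1, h2⟩
    rcases eq_or_ne q [] with rfl | hq
    · simp at h2
    · refine ⟨hq, ⟨by simpa using h1, Or.inr ?_⟩⟩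
      rcases h2 with h2 | h2
      · simp at h2
      · rwa [getLast?_cons_of_ne_nil hq] at h2
  · rintro ⟨hq, h1, h2⟩
    refine ⟨by simpa using h1, Or.inr ?_⟩
    rw [getLast?_cons_of_ne_nil hq]
    rcases h2 with rfl | h2
    · exact absurd rfl hq
    · exact h2

lemma isInitial_node_true (l r : BinTree) (q : List Bool) :
    (node l r).IsInitial (true :: q) ↔ r.IsInitial q := by
  constructor
  · rintro ⟨h1, h2⟩
    refine ⟨by simpa using h1, ?_⟩
    rcases eq_or_ne q [] with rfl | hq
    · exact Or.inl rfl
    · refine Or.inr ?_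
      rcases h2 with h2 | h2
      · simp at h2
      · rwa [getLast?_cons_of_ne_nil hq] at h2
  · rintro ⟨h1, h2⟩
    refine ⟨by simpa using h1, Or.inr ?_⟩
    rcases eq_or_ne q [] with rfl | hq
    · rfl
    · rw [getLast?_cons_of_ne_nil hq]
      rcases h2 with rfl | h2
      · exact absurd rfl hq
      · exact h2

lemma nrgood_leaf : NRGood leaf := fun p hp h => absurd h (not_isInitial_leaf p hp)

lemma nrgood_node (l r : BinTree) : NRGood (node l r) ↔ NRGood l ∧ GoodT r := by
  constructor
  · intro h
    refine ⟨fun q hq hi => ?_, fun q hi => ?_⟩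
    · have := h (false :: q) (by simp) ((isInitial_node_false l r q).2 ⟨hq, hi⟩)
      simpa using this
    · have := h (true :: q) (by simp) ((isInitial_node_true l r q).2 hi)
      simpa using this
  · rintro ⟨hl, hr⟩ p hp hi
    match p with
    | [] => exact absurd rfl hp
    | false :: q =>
      obtain ⟨hq, hi⟩ := (isInitial_node_false l r q).1 hi
      simpa using hl q hq hi
    | true :: q =>
      have hi := (isInitial_node_true l r q).1 hi
      simpa using hr q hi

lemma goodT_iff (t : BinTree) : GoodT t ↔ NRGood t ∧ t.leftLen % 4 ≤ 1 := by
  constructor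
  · intro h
    exact ⟨fun p _ hi => h p hi, by simpa using h [] (isInitial_nil t)⟩
  · rintro ⟨h1, h2⟩ p hi
    rcases eq_or_ne p [] with rfl | hp
    · simpa using h2
    · exact h1 p hp hi

lemma internals_eq_zero {t : BinTree} : internals t = 0 ↔ t = leaf := by
  cases t <;> simp [internals]

/-- surjection used for finiteness and counting -/
lemma node_surj (n : ℕ) (P Q R : BinTree → Prop)
    (hR : ∀ l r, R (node l r) → P l ∧ Q r) :
    ∀ t : {t : BinTree // internals t = n + 1 ∧ R t},
      ∃ x : (Σ i : Fin (n + 1),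
          {l : BinTree // internals l = i.1 ∧ P l} ×
          {r : BinTree // internals r = n - i.1 ∧ Q r}),
        node x.2.1.1 x.2.2.1 = t.1 := by
  rintro ⟨t, ht, hRt⟩
  cases t with
  | leaf => simp [internals] at ht
  | node l r =>
    have h : internals l + internals r + 1 = n + 1 := ht
    have hi : internals l < n + 1 := by omega
    obtain ⟨hP, hQ⟩ := hR l r hRt
    exact ⟨⟨⟨internals l, hi⟩, ⟨⟨l, rfl, hP⟩, ⟨r, by show internals r = n - internals l; omega, hQ⟩⟩⟩, rfl⟩

lemma finite_internals (n : ℕ) : Finite {t : BinTree // internals t = n} := by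
  induction n using Nat.strong_induction_on with
  | _ n ih =>
    match n with
    | 0 =>
      have : Subsingleton {t : BinTree // internals t = 0} :=
        ⟨fun a b => Subtype.ext (by rw [internals_eq_zero.1 a.2, internals_eq_zero.1 b.2])⟩
      infer_instance
    | n + 1 =>
      have h1 : ∀ i : Fin (n + 1), Finite {l : BinTree // internals l = i.1 ∧ True} := by
        intro i
        have := ih i.1 (by omega)
        exact Finite.of_injective (fun x : {l : BinTree // internals l = i.1 ∧ True} =>
          (⟨x.1, x.2.1⟩ : {l : BinTree // internals l = i.1})) (fun a b h => by cases a; cases b; simpa using h)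
      have h2 : ∀ i : Fin (n + 1), Finite {r : BinTree // internals r = n - i.1 ∧ True} := by
        intro i
        have := ih (n - i.1) (by omega)
        exact Finite.of_injective (fun x : {r : BinTree // internals r = n - i.1 ∧ True} =>
          (⟨x.1, x.2.1⟩ : {r : BinTree // internals r = n - i.1})) (fun a b h => by cases a; cases b; simpa using h)
      have hs := node_surj n (fun _ => True) (fun _ => True) (fun _ => True) (fun _ _ _ => ⟨trivial, trivial⟩)
      refine Finite.of_surjective
        (fun x : (Σ i : Fin (n + 1), {l : BinTree // internals l = i.1 ∧ True} ×
            {r : BinTree // internals r = n - i.1 ∧ True}) =>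
          (⟨node x.2.1.1 x.2.2.1, by
            obtain ⟨⟨i, hi⟩, ⟨⟨l, hl, _⟩, ⟨r, hr, _⟩⟩⟩ := x
            show internals (node l r) = n + 1
            simp only [internals]; omega⟩ : {t : BinTree // internals t = n + 1})) ?_
      intro t
      obtain ⟨x, hx⟩ := hs ⟨t.1, t.2, trivial⟩
      exact ⟨x, Subtype.ext hx⟩

instance finite_sub (n : ℕ) (P : BinTree → Prop) : Finite {t : BinTree // internals t = n ∧ P t} := by
  have := finite_internals n
  exact Finite.of_injective (fun x : {t : BinTree // internals t = n ∧ P t} =>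
    (⟨x.1, x.2.1⟩ : {t : BinTree // internals t = n})) (fun a b h => by cases a; cases b; simpa using h)

/-- the key splitting lemma for counting -/
lemma card_split (n : ℕ) (P Q R : BinTree → Prop)
    (hR : ∀ l r, R (node l r) ↔ P l ∧ Q r) :
    Nat.card {t : BinTree // internals t = n + 1 ∧ R t} =
      ∑ i ∈ Finset.range (n + 1),
        Nat.card {l : BinTree // internals l = i ∧ P l} *
        Nat.card {r : BinTree // internals r = n - i ∧ Q r} := by
  have hbij : Function.Bijective
      (fun x : (Σ i : Fin (n + 1), {l : BinTree // internals l = i.1 ∧ P l} ×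
          {r : BinTree // internals r = n - i.1 ∧ Q r}) =>
        (⟨node x.2.1.1 x.2.2.1, by
          obtain ⟨⟨i, hi⟩, ⟨⟨l, hl, hPl⟩, ⟨r, hr, hQr⟩⟩⟩ := x
          refine ⟨?_, (hR l r).2 ⟨hPl, hQr⟩⟩
          show internals (node l r) = n + 1
          simp only [internals]; omega⟩ : {t : BinTree // internals t = n + 1 ∧ R t})) := by
    constructor
    · rintro ⟨⟨i, hi⟩, ⟨⟨l, hl, hPl⟩, ⟨r, hr, hQr⟩⟩⟩ ⟨⟨i', hi'⟩, ⟨⟨l', hl', hPl'⟩, ⟨r', hr', hQr'⟩⟩⟩ h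
      have h' : node l r = node l' r' := congrArg Subtype.val h
      injection h' with h1 h2
      subst h1; subst h2
      have : i = i' := hl.symm.trans hl'
      subst this
      rfl
    · intro t
      obtain ⟨x, hx⟩ := node_surj n P Q R (fun l r h => (hR l r).1 h) t
      exact ⟨x, Subtype.ext hx⟩
  rw [← Nat.card_congr (Equiv.ofBijective _ hbij)]
  have : ∀ i : Fin (n+1), Fintype ({l : BinTree // internals l = i.1 ∧ P l} ×
      {r : BinTree // internals r = n - i.1 ∧ Q r}) := fun i => Fintype.ofFinite _
  simp only [Nat.card_eq_fintype_card, Fintype.card_sigma]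
  rw [← Fin.sum_univ_eq_sum_range]
  congr 1
  funext i
  rw [← Nat.card_eq_fintype_card, Nat.card_prod]


end BinTree

namespace BinTree

/-- number of trees with `n` internal vertices, good except possibly at the root,
with leftmost path length ≡ r mod 4 -/
noncomputable def Ncard (r n : ℕ) : ℕ :=
  Nat.card {t : BinTree // internals t = n ∧ (NRGood t ∧ leftLen t % 4 = r)}

/-- number of good trees with `n` internal vertices -/
noncomputable def Gcard (n : ℕ) : ℕ := Nat.card {t : BinTree // internals t = n ∧ GoodT t}

lemma Ncard_zero (r : ℕ) : Ncard r 0 = if r = 0 then 1 else 0 := by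
  rcases eq_or_ne r 0 with rfl | hr
  · rw [if_pos rfl]
    have : Unique {t : BinTree // internals t = 0 ∧ (NRGood t ∧ leftLen t % 4 = 0)} := by
      refine ⟨⟨⟨leaf, rfl, nrgood_leaf, by simp [leftLen]⟩⟩, ?_⟩
      rintro ⟨t, ht, _⟩
      exact Subtype.ext (internals_eq_zero.1 ht)
    exact Nat.card_unique
  · rw [if_neg hr]
    have : IsEmpty {t : BinTree // internals t = 0 ∧ (NRGood t ∧ leftLen t % 4 = r)} := by
      refine ⟨?_⟩
      rintro ⟨t, ht, _, hlen⟩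
      rw [internals_eq_zero.1 ht] at hlen
      simp [leftLen] at hlen
      exact hr hlen.symm
    exact Nat.card_of_isEmpty

lemma Gcard_eq (n : ℕ) : Gcard n = Ncard 0 n + Ncard 1 n := by
  classical
  have h1 : Gcard n = Nat.card {t : BinTree // internals t = n ∧
      ((NRGood t ∧ leftLen t % 4 = 0) ∨ (NRGood t ∧ leftLen t % 4 = 1))} := by
    apply Nat.card_congr
    apply Equiv.subtypeEquivRight
    intro t
    rw [goodT_iff]
    constructor
    · rintro ⟨h1, ⟨h2, h3⟩⟩
      rcases Nat.lt_or_ge (leftLen t % 4) 1 with h | h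
      · exact ⟨h1, Or.inl ⟨h2, by omega⟩⟩
      · exact ⟨h1, Or.inr ⟨h2, by omega⟩⟩
    · rintro ⟨h1, (⟨h2, h3⟩ | ⟨h2, h3⟩)⟩ <;> exact ⟨h1, h2, by omega⟩
  rw [h1, Ncard, Ncard]
  have e : {t : BinTree // internals t = n ∧
      ((NRGood t ∧ leftLen t % 4 = 0) ∨ (NRGood t ∧ leftLen t % 4 = 1))} ≃
      {t : BinTree // internals t = n ∧ (NRGood t ∧ leftLen t % 4 = 0)} ⊕
      {t : BinTree // internals t = n ∧ (NRGood t ∧ leftLen t % 4 = 1)} := by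
    refine Equiv.ofBijective (fun x => match x with
      | Sum.inl ⟨t, h⟩ => ⟨t, h.1, Or.inl h.2⟩
      | Sum.inr ⟨t, h⟩ => ⟨t, h.1, Or.inr h.2⟩) ⟨?_, ?_⟩ |>.symm
    · rintro (⟨t, h⟩ | ⟨t, h⟩) (⟨t', h'⟩ | ⟨t', h'⟩) heq <;>
        simp only [Subtype.mk.injEq] at heq
      · subst heq; rfl
      · exfalso; subst heq; omega
      · exfalso; subst heq; omega
      · subst heq; rfl
    · rintro ⟨t, ht, (h | h)⟩
      · exact ⟨Sum.inl ⟨t, ht, h⟩, rfl⟩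
      · exact ⟨Sum.inr ⟨t, ht, h⟩, rfl⟩
  rw [Nat.card_congr e, Nat.card_sum]

lemma Ncard_succ (r n : ℕ) (hr : r < 4) :
    Ncard r (n + 1) = ∑ i ∈ Finset.range (n + 1), Ncard ((r + 3) % 4) i * Gcard (n - i) := by
  apply card_split
  intro l r'
  constructor
  · rintro ⟨h1, h2⟩
    obtain ⟨hl, hg⟩ := (nrgood_node l r').1 h1
    have hlen : leftLen (node l r') = leftLen l + 1 := rfl
    rw [hlen] at h2
    exact ⟨⟨hl, by omega⟩, hg⟩
  · rintro ⟨⟨hl, h2⟩, hg⟩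
    refine ⟨(nrgood_node l r').2 ⟨hl, hg⟩, ?_⟩
    have hlen : leftLen (node l r') = leftLen l + 1 := rfl
    rw [hlen]
    omega

end BinTree


namespace BinTree

lemma ColoredBinTree.ext' {B C : ColoredBinTree} (h1 : B.tree = C.tree)
    (h2 : B.color = C.color) : B = C := by
  cases B; cases C
  simp only at h1 h2
  subst h1; subst h2
  rfl

open Classical in
/-- the canonical coloring of a tree -/
noncomputable def toColored (t : BinTree) : ColoredBinTree where
  tree := t
  color p := if t.IsInitial p then 2 * (t.pathLen p / 4) else 0
  color_le p hp := by rw [if_pos hp]; omega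
  color_eq_zero p hp := if_neg hp

@[simp] lemma toColored_tree (t : BinTree) : (toColored t).tree = t := rfl

lemma card_colored (n : ℕ) :
    Nat.card {B : ColoredBinTree // B.tree.internals = n ∧ B.Proper} = Gcard n := by
  classical
  apply Nat.card_congr
  refine ⟨fun B => ⟨B.1.tree, B.2.1, fun p hp => ?_⟩,
    fun t => ⟨toColored t.1, t.2.1, fun p hp => ?_⟩, fun B => ?_, fun t => ?_⟩
  · obtain ⟨k, _, hl⟩ := B.2.2 p hp
    rcases hl with h | h <;> omega
  · simp only [toColored_tree] at hp
    refine ⟨t.1.pathLen p / 4, ?_, ?_⟩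
    · show (if t.1.IsInitial p then 2 * (t.1.pathLen p / 4) else 0) = _
      rw [if_pos hp]
    · have := t.2.2 p hp
      simp only [toColored_tree]
      omega
  · apply Subtype.ext
    show (B.1.tree).toColored = B.1
    apply ColoredBinTree.ext'
    · rfl
    funext p
    show (if B.1.tree.IsInitial p then 2 * (B.1.tree.pathLen p / 4) else 0) = B.1.color p
    by_cases hp : B.1.tree.IsInitial p
    · rw [if_pos hp]
      obtain ⟨k, hc, hl⟩ := B.2.2 p hp
      rcases hl with h | h <;> omega
    · rw [if_neg hp, B.1.color_eq_zero p hp]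
  · exact Subtype.ext rfl

end BinTree

namespace BinTree

open PowerSeries

noncomputable def Nq (r : ℕ) : PowerSeries ℚ := PowerSeries.mk fun n => (Ncard r n : ℚ)
noncomputable def Gq : PowerSeries ℚ := PowerSeries.mk fun n => (Gcard n : ℚ)

lemma mk_eq_X_mul_mul (a b c : ℕ → ℚ) (h0 : a 0 = 0)
    (hs : ∀ n, a (n + 1) = ∑ i ∈ Finset.range (n + 1), b i * c (n - i)) :
    PowerSeries.mk a = X * (PowerSeries.mk b * PowerSeries.mk c) := by
  ext n
  cases n with
  | zero =>
    simp only [coeff_zero_eq_constantCoeff, map_mul, constantCoeff_X, zero_mul, constantCoeff_mk]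
    exact h0
  | succ n =>
    rw [coeff_succ_X_mul, coeff_mk, coeff_mul, Finset.Nat.sum_antidiagonal_eq_sum_range_succ_mk]
    simp only [coeff_mk]
    exact hs n

lemma eqN1 : Nq 1 = X * (Nq 0 * Gq) := by
  apply mk_eq_X_mul_mul
  · rw [Ncard_zero]; norm_num
  · intro n
    rw [Ncard_succ 1 n (by norm_num)]
    push_cast
    norm_num

lemma eqN2 : Nq 2 = X * (Nq 1 * Gq) := by
  apply mk_eq_X_mul_mul
  · rw [Ncard_zero]; norm_num
  · intro n
    rw [Ncard_succ 2 n (by norm_num)]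
    push_cast
    norm_num

lemma eqN3 : Nq 3 = X * (Nq 2 * Gq) := by
  apply mk_eq_X_mul_mul
  · rw [Ncard_zero]; norm_num
  · intro n
    rw [Ncard_succ 3 n (by norm_num)]
    push_cast
    norm_num

lemma eqN0 : Nq 0 = 1 + X * (Nq 3 * Gq) := by
  have h : Nq 0 - 1 = X * (Nq 3 * Gq) := by
    have : Nq 0 - 1 = PowerSeries.mk fun n => if n = 0 then (Ncard 0 0 : ℚ) - 1 else (Ncard 0 n : ℚ) := by
      ext m
      cases m with
      | zero => simp [Nq, coeff_zero_eq_constantCoeff]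
      | succ m => simp [Nq]
    rw [this]
    apply mk_eq_X_mul_mul
    · rw [if_pos rfl, Ncard_zero]; norm_num
    · intro n
      rw [if_neg (by omega), Ncard_succ 0 n (by norm_num)]
      push_cast
      norm_num
  linear_combination h

lemma eqG : Gq = Nq 0 + Nq 1 := by
  ext n
  simp only [Nq, Gq, coeff_mk, map_add]
  rw [Gcard_eq]
  push_cast
  ring

/-- the functional equation -/
lemma Hrel : X * Gq - (X * Gq) ^ 2 + (X * Gq) ^ 3 - (X * Gq) ^ 4 = X := by
  have e2 : Nq 2 = X ^ 2 * Nq 0 * Gq ^ 2 := by rw [eqN2, eqN1]; ring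
  have e3 : Nq 3 = X ^ 3 * Nq 0 * Gq ^ 3 := by rw [eqN3, e2]; ring
  have key : Nq 0 * (1 - (X * Gq) ^ 4) = 1 := by
    have := eqN0
    rw [e3] at this
    linear_combination this
  have gEq : Gq = Nq 0 * (1 + X * Gq) := by linear_combination eqG + eqN1
  have cancel : (1 + X * Gq) ≠ 0 := by
    intro h
    have := congrArg (constantCoeff) h
    simp at this
  have main : (X * Gq - (X * Gq) ^ 2 + (X * Gq) ^ 3 - (X * Gq) ^ 4 - X) * (1 + X * Gq) = 0 := by
    linear_combination (X * (1 + X * Gq)) * key + (X * (1 - (X * Gq) ^ 4)) * gEq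
  rcases mul_eq_zero.1 main with h | h
  · linear_combination h
  · exact absurd h cancel

end BinTree

namespace PSComp

open PowerSeries Polynomial

variable (Φ : PowerSeries ℚ)

lemma coeff_pow_eq_zero (hΦ : constantCoeff Φ = 0) {k m : ℕ} (h : m < k) :
    coeff m (Φ ^ k) = 0 := by
  have h1 : (X : PowerSeries ℚ) ^ k ∣ Φ ^ k := pow_dvd_pow_of_dvd (X_dvd_iff.2 hΦ) k
  exact (X_pow_dvd_iff.1 h1) m h

/-- composition `f ∘ Φ`, defined coefficientwise via truncations -/
noncomputable def Comp (f : PowerSeries ℚ) : PowerSeries ℚ :=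
  PowerSeries.mk fun m => coeff m (Polynomial.aeval Φ (trunc (m + 1) f))

lemma coeff_aeval_eq_zero (hΦ : constantCoeff Φ = 0) (p : Polynomial ℚ) (m : ℕ)
    (h : ∀ k ≤ m, p.coeff k = 0) : coeff m (Polynomial.aeval Φ p) = 0 := by
  have hd : p.natDegree < p.natDegree + 1 := Nat.lt_succ_self _
  rw [Polynomial.aeval_eq_sum_range' hd]
  rw [map_sum]
  apply Finset.sum_eq_zero
  intro k _
  rcases le_or_gt k m with hk | hk
  · rw [h k hk, zero_smul, map_zero]
  · have : coeff m (p.coeff k • Φ ^ k) = p.coeff k • coeff m (Φ ^ k) := by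
      simp
    rw [this, coeff_pow_eq_zero Φ hΦ hk, smul_zero]

lemma coeff_Comp_stable (hΦ : constantCoeff Φ = 0) (f : PowerSeries ℚ) {m n : ℕ} (h : m < n) :
    coeff m (Polynomial.aeval Φ (trunc n f)) = coeff m (Comp Φ f) := by
  have hsplit : Polynomial.aeval Φ (trunc n f) =
      Polynomial.aeval Φ (trunc (m + 1) f) + Polynomial.aeval Φ (trunc n f - trunc (m + 1) f) := by
    rw [← map_add]; ring_nf
  rw [Comp, coeff_mk, hsplit, map_add]
  have hz : coeff m (Polynomial.aeval Φ (trunc n f - trunc (m + 1) f)) = 0 := by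
    apply coeff_aeval_eq_zero Φ hΦ
    intro k hk
    rw [Polynomial.coeff_sub, coeff_trunc, coeff_trunc, if_pos (by omega), if_pos (by omega), sub_self]
  rw [hz, add_zero]

lemma Comp_add (f g : PowerSeries ℚ) : Comp Φ (f + g) = Comp Φ f + Comp Φ g := by
  ext m
  simp only [Comp, coeff_mk, map_add, map_add]

lemma Comp_one : Comp Φ 1 = 1 := by
  ext m
  simp only [Comp, coeff_mk, trunc_one, map_one]

lemma Comp_X (hΦ : constantCoeff Φ = 0) : Comp Φ X = Φ := by
  ext m
  cases m with
  | zero =>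
    have : trunc 1 (X : PowerSeries ℚ) = 0 := by
      apply Polynomial.ext
      intro k
      rw [coeff_trunc]
      rcases Nat.eq_zero_or_pos k with rfl | hk
      · simp
      · rw [if_neg (by omega), Polynomial.coeff_zero]
    simp [Comp, this, coeff_zero_eq_constantCoeff, hΦ]
  | succ m =>
    have : m + 1 + 1 = m + 2 := rfl
    rw [Comp, coeff_mk, this, trunc_X, Polynomial.aeval_X]

lemma Comp_mul (hΦ : constantCoeff Φ = 0) (f g : PowerSeries ℚ) :
    Comp Φ (f * g) = Comp Φ f * Comp Φ g := by
  ext m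
  set n := m + 1 with hn
  rw [PowerSeries.coeff_mul]
  have step1 : ∀ p ∈ Finset.HasAntidiagonal.antidiagonal m,
      coeff p.1 (Comp Φ f) * coeff p.2 (Comp Φ g) =
      coeff p.1 (Polynomial.aeval Φ (trunc n f)) * coeff p.2 (Polynomial.aeval Φ (trunc n g)) := by
    intro p hp
    have hmem := Finset.HasAntidiagonal.mem_antidiagonal.1 hp
    rw [coeff_Comp_stable Φ hΦ f (by omega), coeff_Comp_stable Φ hΦ g (by omega)]
  rw [Finset.sum_congr rfl step1, ← PowerSeries.coeff_mul, ← map_mul]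
  have key : coeff m (Polynomial.aeval Φ (trunc n f * trunc n g)) =
      coeff m (Polynomial.aeval Φ (trunc n ((trunc n f : PowerSeries ℚ) * (trunc n g : PowerSeries ℚ)))) := by
    have hsplit : Polynomial.aeval Φ (trunc n f * trunc n g) =
        Polynomial.aeval Φ (trunc n ((trunc n f : PowerSeries ℚ) * (trunc n g : PowerSeries ℚ))) +
        Polynomial.aeval Φ (trunc n f * trunc n g -
          trunc n ((trunc n f : PowerSeries ℚ) * (trunc n g : PowerSeries ℚ))) := by
      rw [← map_add]; ring_nf
    rw [hsplit, map_add]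
    have hz : coeff m (Polynomial.aeval Φ (trunc n f * trunc n g -
        trunc n ((trunc n f : PowerSeries ℚ) * (trunc n g : PowerSeries ℚ)))) = 0 := by
      apply coeff_aeval_eq_zero Φ hΦ
      intro k hk
      rw [Polynomial.coeff_sub, coeff_trunc, if_pos (by omega), ← Polynomial.coe_mul, Polynomial.coeff_coe, sub_self]
    rw [hz, add_zero]
  rw [key, trunc_trunc_mul_trunc]
  simp only [Comp, coeff_mk]
  rfl

lemma Comp_pow (hΦ : constantCoeff Φ = 0) (f : PowerSeries ℚ) (k : ℕ) :
    Comp Φ (f ^ k) = (Comp Φ f) ^ k := by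
  induction k with
  | zero => simpa using Comp_one Φ
  | succ k ih => rw [pow_succ, pow_succ, Comp_mul Φ hΦ, ih]

lemma Comp_zero : Comp Φ 0 = 0 := by
  ext m
  have h : trunc (m + 1) (0 : PowerSeries ℚ) = 0 := by
    apply Polynomial.ext
    intro k
    rw [coeff_trunc]
    simp
  simp [Comp, h]

lemma Comp_neg (f : PowerSeries ℚ) : Comp Φ (-f) = - Comp Φ f := by
  have h := Comp_add Φ f (-f)
  rw [add_neg_cancel, Comp_zero] at h
  linear_combination -h

lemma Comp_sub (f g : PowerSeries ℚ) : Comp Φ (f - g) = Comp Φ f - Comp Φ g := by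
  rw [sub_eq_add_neg, Comp_add, Comp_neg, sub_eq_add_neg]

lemma constantCoeff_Comp (f : PowerSeries ℚ) :
    constantCoeff (Comp Φ f) = constantCoeff f := by
  have h : trunc 1 f = Polynomial.C (constantCoeff f) := by
    apply Polynomial.ext
    intro k
    rw [coeff_trunc]
    rcases Nat.eq_zero_or_pos k with rfl | hk
    · simp [coeff_zero_eq_constantCoeff]
    · rw [if_neg (by omega), Polynomial.coeff_C, if_neg (by omega)]
  rw [← coeff_zero_eq_constantCoeff, Comp, coeff_mk, h, Polynomial.aeval_C]
  simp

end PSComp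

namespace BinTree

open PowerSeries PSComp

noncomputable def uu : PowerSeries ℚ := 1 - X + X ^ 2 - X ^ 3
noncomputable def Phi : PowerSeries ℚ := X * uu
noncomputable def HH : PowerSeries ℚ := X * Gq

lemma constantCoeff_Phi : constantCoeff Phi = 0 := by
  simp [Phi]

lemma constantCoeff_HH : constantCoeff HH = 0 := by
  simp [HH]

lemma HrelH : HH - HH ^ 2 + HH ^ 3 - HH ^ 4 = X := by
  simpa [HH] using Hrel

noncomputable def KK : PowerSeries ℚ := Comp Phi HH

lemma K_eq_X : KK = X := by
  have hc := constantCoeff_Phi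
  have h1 : KK - KK ^ 2 + KK ^ 3 - KK ^ 4 = Phi := by
    have h := congrArg (Comp Phi) HrelH
    rw [Comp_sub, Comp_add, Comp_sub, Comp_pow Phi hc, Comp_pow Phi hc, Comp_pow Phi hc,
      Comp_X Phi hc] at h
    exact h
  have hK0 : constantCoeff KK = 0 := by
    rw [KK, constantCoeff_Comp]
    exact constantCoeff_HH
  have hPhiX : Phi = X - X ^ 2 + X ^ 3 - X ^ 4 := by rw [Phi, uu]; ring
  have hfac : (KK - X) * (1 - (KK + X) + (KK ^ 2 + KK * X + X ^ 2) -
      (KK ^ 3 + KK ^ 2 * X + KK * X ^ 2 + X ^ 3)) = 0 := by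
    linear_combination h1 + hPhiX
  rcases mul_eq_zero.1 hfac with h | h
  · linear_combination h
  · exfalso
    have := congrArg (constantCoeff) h
    simp [hK0] at this

lemma poly_chain (Φ : PowerSeries ℚ) (p : Polynomial ℚ) :
    d⁄dX ℚ (Polynomial.aeval Φ p) = Polynomial.aeval Φ (Polynomial.derivative p) * d⁄dX ℚ Φ := by
  induction p using Polynomial.induction_on' with
  | add p q ihp ihq => rw [map_add, map_add, ihp, ihq, Polynomial.derivative_add, map_add, add_mul]
  | monomial k c =>
    rw [Polynomial.aeval_monomial, Polynomial.derivative_monomial, Polynomial.aeval_monomial]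
    rw [Derivation.leibniz, Derivation.leibniz_pow, Derivation.map_algebraMap]
    simp only [smul_zero, add_zero, Algebra.smul_def, nsmul_eq_mul, map_mul, map_natCast,
      Algebra.algebraMap_self_apply, eq_natCast]
    ring

lemma deriv_Comp (Φ : PowerSeries ℚ) (hc : constantCoeff Φ = 0) (f : PowerSeries ℚ) :
    d⁄dX ℚ (Comp Φ f) = Comp Φ (d⁄dX ℚ f) * d⁄dX ℚ Φ := by
  ext m
  have lhs1 : coeff m (d⁄dX ℚ (Comp Φ f)) =
      coeff m (d⁄dX ℚ (Polynomial.aeval Φ (trunc (m + 2) f))) := by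
    rw [coeff_derivative, coeff_derivative, Comp, coeff_mk]
  rw [lhs1, poly_chain, ← trunc_derivative]
  rw [PowerSeries.coeff_mul, PowerSeries.coeff_mul]
  apply Finset.sum_congr rfl
  intro p hp
  have hmem := Finset.HasAntidiagonal.mem_antidiagonal.1 hp
  rw [coeff_Comp_stable Φ hc _ (show p.1 < m + 1 by omega)]

lemma main_deriv : Comp Phi (d⁄dX ℚ HH) * d⁄dX ℚ Phi = 1 := by
  have h := congrArg (d⁄dX ℚ) K_eq_X
  rw [KK, deriv_Comp Phi constantCoeff_Phi, derivative_X] at h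
  exact h

end BinTree

namespace BinTree

open PowerSeries PSComp

noncomputable def vv : PowerSeries ℚ := uu⁻¹

lemma constantCoeff_uu : constantCoeff uu = 1 := by simp [uu]

lemma hv : uu * vv = 1 := by
  rw [vv, mul_comm]
  exact PowerSeries.inv_mul_cancel uu (by rw [constantCoeff_uu]; norm_num)

lemma hpow (j : ℕ) : uu ^ j * vv ^ j = 1 := by
  rw [← mul_pow, hv, one_pow]

lemma constantCoeff_vv : constantCoeff vv = 1 := by
  have := congrArg (constantCoeff) hv
  rw [map_mul, constantCoeff_uu, one_mul, map_one] at this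
  exact this

lemma dPhi_eq : d⁄dX ℚ Phi = uu + X * d⁄dX ℚ uu := by
  rw [Phi, Derivation.leibniz, derivative_X]
  simp only [smul_eq_mul, mul_one]
  ring

lemma dv (s : ℕ) : d⁄dX ℚ (vv ^ (s + 1)) =
    -(((s : PowerSeries ℚ) + 1) * (d⁄dX ℚ uu * vv ^ (s + 2))) := by
  have h0 := congrArg (d⁄dX ℚ) (hpow (s + 1))
  simp only [Derivation.leibniz, Derivation.leibniz_pow, Derivation.map_one_eq_zero,
    smul_eq_mul, nsmul_eq_mul, Nat.add_sub_cancel, Nat.cast_add, Nat.cast_one] at h0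
  have hL := Derivation.leibniz_pow (derivative (R := ℚ)) vv (s + 1)
  simp only [smul_eq_mul, nsmul_eq_mul, Nat.add_sub_cancel, Nat.cast_add, Nat.cast_one] at hL
  have h1 := hpow (s + 1)
  have h2 := hpow s
  linear_combination hL + vv ^ (s + 1) * h0 -
    (((s : PowerSeries ℚ) + 1) * vv ^ s * d⁄dX ℚ vv) * h1 -
    (((s : PowerSeries ℚ) + 1) * vv ^ (s + 2) * d⁄dX ℚ uu) * h2

lemma resid0 : coeff 0 (d⁄dX ℚ Phi * vv ^ 1) = 1 := by
  rw [coeff_zero_eq_constantCoeff, map_mul, pow_one, constantCoeff_vv, mul_one]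
  rw [← coeff_zero_eq_constantCoeff, coeff_derivative, Phi, coeff_succ_X_mul,
    coeff_zero_eq_constantCoeff, constantCoeff_uu]
  norm_num

lemma resid (m : ℕ) (hm : 1 ≤ m) : coeff m (d⁄dX ℚ Phi * vv ^ (m + 1)) = 0 := by
  obtain ⟨s, rfl⟩ : ∃ s, m = s + 1 := ⟨m - 1, by omega⟩
  have key : ((s : PowerSeries ℚ) + 1) * (d⁄dX ℚ Phi * vv ^ (s + 1 + 1)) =
      ((s : PowerSeries ℚ) + 1) * vv ^ (s + 1) - X * d⁄dX ℚ (vv ^ (s + 1)) := by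
    have h1 : uu * vv ^ (s + 2) = vv ^ (s + 1) := by
      calc uu * vv ^ (s + 2) = (uu * vv) * vv ^ (s + 1) := by ring
      _ = vv ^ (s + 1) := by rw [hv, one_mul]
    have h2 := dv s
    rw [dPhi_eq]
    linear_combination (((s : PowerSeries ℚ) + 1)) * h1 + X * h2
  have hc := congrArg (coeff (s + 1)) key
  have cast1 : ((s : PowerSeries ℚ) + 1) = C ((s : ℚ) + 1) := by
    rw [map_add, map_one, map_natCast]
  rw [cast1, coeff_C_mul, map_sub, coeff_C_mul, coeff_succ_X_mul,
    coeff_derivative] at hc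
  have hz : ((s : ℚ) + 1) * coeff (s + 1) (d⁄dX ℚ Phi * vv ^ (s + 1 + 1)) = 0 := by
    rw [hc]; ring
  have hne : ((s : ℚ) + 1) ≠ 0 := by positivity
  exact (mul_eq_zero.1 hz).resolve_left hne

lemma extract (n : ℕ) : ((n : ℚ) + 1) * coeff n Gq = coeff n (vv ^ (n + 1)) := by
  have M : Comp Phi (d⁄dX ℚ HH) * (d⁄dX ℚ Phi * vv ^ (n + 1)) = vv ^ (n + 1) := by
    calc Comp Phi (d⁄dX ℚ HH) * (d⁄dX ℚ Phi * vv ^ (n + 1))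
        = (Comp Phi (d⁄dX ℚ HH) * d⁄dX ℚ Phi) * vv ^ (n + 1) := by ring
      _ = vv ^ (n + 1) := by rw [main_deriv, one_mul]
  have hM := congrArg (coeff n) M
  rw [PowerSeries.coeff_mul] at hM
  have step1 : ∀ p ∈ Finset.HasAntidiagonal.antidiagonal n,
      coeff p.1 (Comp Phi (d⁄dX ℚ HH)) * coeff p.2 (d⁄dX ℚ Phi * vv ^ (n + 1)) =
      coeff p.1 (Polynomial.aeval Phi (trunc (n + 1) (d⁄dX ℚ HH))) *
        coeff p.2 (d⁄dX ℚ Phi * vv ^ (n + 1)) := by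
    intro p hp
    have hmem := Finset.HasAntidiagonal.mem_antidiagonal.1 hp
    rw [coeff_Comp_stable Phi constantCoeff_Phi _ (show p.1 < n + 1 by omega)]
  rw [Finset.sum_congr rfl step1, ← PowerSeries.coeff_mul] at hM
  -- expand the polynomial evaluation
  have hdeg := natDegree_trunc_lt (d⁄dX ℚ HH) n
  rw [Polynomial.aeval_eq_sum_range' hdeg, Finset.sum_mul, map_sum] at hM
  have termval : ∀ k ∈ Finset.range (n + 1),
      coeff n (Phi ^ k * (d⁄dX ℚ Phi * vv ^ (n + 1))) = if k = n then 1 else 0 := by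
    intro k hk
    have hkn : k ≤ n := by
      have := Finset.mem_range.1 hk; omega
    have hvsplit : vv ^ (n + 1) = vv ^ k * vv ^ (n - k + 1) := by
      rw [← pow_add]; congr 1; omega
    have hsplit : Phi ^ k * (d⁄dX ℚ Phi * vv ^ (n + 1)) =
        X ^ k * (d⁄dX ℚ Phi * vv ^ (n - k + 1)) := by
      calc Phi ^ k * (d⁄dX ℚ Phi * vv ^ (n + 1))
          = (uu ^ k * vv ^ k) * (X ^ k * (d⁄dX ℚ Phi * vv ^ (n - k + 1))) := by
            rw [Phi, mul_pow, hvsplit]; ring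
        _ = X ^ k * (d⁄dX ℚ Phi * vv ^ (n - k + 1)) := by rw [hpow, one_mul]
    rw [hsplit]
    have hXpow := PowerSeries.coeff_X_pow_mul (d⁄dX ℚ Phi * vv ^ (n - k + 1)) k (n - k)
    rw [show n - k + k = n from by omega] at hXpow
    rw [hXpow]
    rcases eq_or_ne k n with rfl | hne
    · rw [if_pos rfl, Nat.sub_self]
      exact resid0
    · rw [if_neg hne]
      exact resid (n - k) (by omega)
  have hterm : ∀ k ∈ Finset.range (n + 1),
      coeff n ((trunc (n + 1) (d⁄dX ℚ HH)).coeff k • Phi ^ k * (d⁄dX ℚ Phi * vv ^ (n + 1))) =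
      (trunc (n + 1) (d⁄dX ℚ HH)).coeff k * (if k = n then 1 else 0) := by
    intro k hk
    rw [smul_mul_assoc, map_smul, smul_eq_mul, termval k hk]
  rw [Finset.sum_congr rfl hterm] at hM
  rw [Finset.sum_eq_single n (fun b _ hb => by rw [if_neg hb, mul_zero])
    (fun h => absurd (Finset.self_mem_range_succ n) h), if_pos rfl, mul_one] at hM
  rw [coeff_trunc, if_pos (Nat.lt_succ_self n), coeff_derivative, HH, coeff_succ_X_mul] at hM
  rw [← hM]
  ring

noncomputable def Aser (n : ℕ) : PowerSeries ℚ := PowerSeries.mk fun j => ((n + j).choose j : ℚ)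

noncomputable def Bser (n : ℕ) : PowerSeries ℚ :=
  PowerSeries.mk fun j => if j % 2 = 0 then ((-1 : ℚ) ^ (j / 2) * ((n + j / 2).choose (j / 2))) else 0

lemma coeff_one_sub_X_mul (f : PowerSeries ℚ) (m : ℕ) :
    coeff (m + 1) ((1 - X) * f) = coeff (m + 1) f - coeff m f := by
  rw [sub_mul, one_mul, map_sub, coeff_succ_X_mul]

lemma coeff_zero_one_sub_X_mul (f : PowerSeries ℚ) :
    coeff 0 ((1 - X) * f) = coeff 0 f := by
  simp [coeff_zero_eq_constantCoeff]

lemma baseA : (1 - X) * Aser 0 = 1 := by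
  ext m
  cases m with
  | zero =>
    rw [coeff_zero_one_sub_X_mul]
    simp [Aser, PowerSeries.coeff_one]
  | succ m =>
    rw [coeff_one_sub_X_mul]
    simp [Aser, PowerSeries.coeff_one]

lemma stepA (n : ℕ) : (1 - X) * Aser (n + 1) = Aser n := by
  ext m
  cases m with
  | zero =>
    rw [coeff_zero_one_sub_X_mul]
    simp [Aser]
  | succ m =>
    rw [coeff_one_sub_X_mul]
    simp only [Aser, coeff_mk]
    have hp := Nat.choose_succ_succ (n + m + 1) m
    have h1 : n + 1 + (m + 1) = n + m + 1 + 1 := by omega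
    have h2 : n + 1 + m = n + m + 1 := by omega
    have h3 : n + (m + 1) = n + m + 1 := by omega
    rw [h1, h2, h3]
    rw [hp]
    push_cast
    ring

lemma hA (n : ℕ) : (1 - X) ^ (n + 1) * Aser n = 1 := by
  induction n with
  | zero => simpa using baseA
  | succ n ih =>
    calc (1 - X) ^ (n + 2) * Aser (n + 1)
        = (1 - X) ^ (n + 1) * ((1 - X) * Aser (n + 1)) := by ring
      _ = (1 - X) ^ (n + 1) * Aser n := by rw [stepA]
      _ = 1 := ih

lemma coeff_one_add_X_sq_mul (f : PowerSeries ℚ) (m : ℕ) :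
    coeff (m + 2) ((1 + X ^ 2) * f) = coeff (m + 2) f + coeff m f := by
  rw [add_mul, one_mul, map_add]
  congr 1
  exact PowerSeries.coeff_X_pow_mul f 2 m

lemma coeff_low_one_add_X_sq_mul (f : PowerSeries ℚ) (m : ℕ) (hm : m < 2) :
    coeff m ((1 + X ^ 2) * f) = coeff m f := by
  rw [add_mul, one_mul, map_add]
  have : coeff m (X ^ 2 * f) = 0 := by
    have hdvd : (X : PowerSeries ℚ) ^ 2 ∣ X ^ 2 * f := Dvd.intro f rfl
    exact X_pow_dvd_iff.1 hdvd m hm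
  rw [this, add_zero]

lemma baseB : (1 + X ^ 2) * Bser 0 = 1 := by
  ext m
  match m with
  | 0 =>
    rw [coeff_low_one_add_X_sq_mul _ _ (by omega)]
    simp [Bser, PowerSeries.coeff_one]
  | 1 =>
    rw [coeff_low_one_add_X_sq_mul _ _ (by omega)]
    simp [Bser, PowerSeries.coeff_one]
  | (m + 2) =>
    rw [coeff_one_add_X_sq_mul]
    simp only [Bser, coeff_mk, PowerSeries.coeff_one]
    rcases Nat.even_or_odd m with he | ho
    · have h0 : m % 2 = 0 := Nat.even_iff.1 he
      rw [if_pos (by omega), if_pos h0, if_neg (by omega)]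
      rw [show (m + 2) / 2 = m / 2 + 1 from by omega]
      simp only [Nat.zero_add, Nat.choose_self]
      rw [pow_succ]
      push_cast
      ring
    · have h1 : m % 2 = 1 := Nat.odd_iff.1 ho
      rw [if_neg (by omega), if_neg (by omega), if_neg (by omega)]
      ring

lemma stepB (n : ℕ) : (1 + X ^ 2) * Bser (n + 1) = Bser n := by
  ext m
  match m with
  | 0 =>
    rw [coeff_low_one_add_X_sq_mul _ _ (by omega)]
    simp [Bser]
  | 1 =>
    rw [coeff_low_one_add_X_sq_mul _ _ (by omega)]
    simp [Bser]
  | (m + 2) =>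
    rw [coeff_one_add_X_sq_mul]
    simp only [Bser, coeff_mk]
    rcases Nat.even_or_odd m with he | ho
    · have h0 : m % 2 = 0 := Nat.even_iff.1 he
      rw [if_pos (by omega), if_pos h0, if_pos (by omega)]
      rw [show (m + 2) / 2 = m / 2 + 1 from by omega]
      set p := m / 2
      have hp := Nat.choose_succ_succ (n + p + 1) p
      have h1 : n + 1 + (p + 1) = n + p + 1 + 1 := by omega
      have h2 : n + 1 + p = n + p + 1 := by omega
      have h3 : n + (p + 1) = n + p + 1 := by omega
      rw [h1, h2, h3, hp]
      push_cast
      ring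
    · have h1 : m % 2 = 1 := Nat.odd_iff.1 ho
      rw [if_neg (by omega), if_neg (by omega), if_neg (by omega)]
      ring

lemma hB (n : ℕ) : (1 + X ^ 2) ^ (n + 1) * Bser n = 1 := by
  induction n with
  | zero => simpa using baseB
  | succ n ih =>
    calc (1 + X ^ 2) ^ (n + 2) * Bser (n + 1)
        = (1 + X ^ 2) ^ (n + 1) * ((1 + X ^ 2) * Bser (n + 1)) := by ring
      _ = (1 + X ^ 2) ^ (n + 1) * Bser n := by rw [stepB]
      _ = 1 := ih

lemma vv_pow_eq (n : ℕ) : vv ^ (n + 1) = Aser n * Bser n := by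
  have h1 : uu ^ (n + 1) * (Aser n * Bser n) = 1 := by
    have hufact : uu = (1 - X) * (1 + X ^ 2) := by rw [uu]; ring
    calc uu ^ (n + 1) * (Aser n * Bser n)
        = ((1 - X) ^ (n + 1) * Aser n) * ((1 + X ^ 2) ^ (n + 1) * Bser n) := by
          rw [hufact, mul_pow]; ring
      _ = 1 := by rw [hA, hB, one_mul]
  have h2 : uu ^ (n + 1) * vv ^ (n + 1) = 1 := hpow (n + 1)
  have hne : uu ^ (n + 1) ≠ 0 := by
    intro h
    have := congrArg (constantCoeff) h
    rw [map_pow, constantCoeff_uu, map_zero] at this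
    simp at this
  exact mul_left_cancel₀ hne (h2.trans h1.symm)

lemma coeffAB (n : ℕ) : coeff n (Aser n * Bser n) =
    ∑ p ∈ Finset.range (n / 2 + 1),
      (-1 : ℚ) ^ p * ((n + p).choose p) * ((2 * n - 2 * p).choose (n - 2 * p)) := by
  rw [PowerSeries.coeff_mul, Finset.Nat.sum_antidiagonal_eq_sum_range_succ_mk]
  have hsub : (Finset.range (n / 2 + 1)).image (fun p => n - 2 * p) ⊆ Finset.range (n + 1) := by
    intro k hk
    obtain ⟨p, _, rfl⟩ := Finset.mem_image.1 hk
    exact Finset.mem_range.2 (by omega)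
  rw [← Finset.sum_subset hsub]
  · rw [Finset.sum_image (fun p hp q hq h => by
      have hp' := Finset.mem_range.1 hp
      have hq' := Finset.mem_range.1 hq
      omega)]
    apply Finset.sum_congr rfl
    intro p hp
    have hp' : p ≤ n / 2 := by have := Finset.mem_range.1 hp; omega
    simp only [Aser, Bser, coeff_mk]
    have h1 : n - (n - 2 * p) = 2 * p := by omega
    rw [h1]
    rw [if_pos (by omega), show 2 * p / 2 = p from by omega]
    have h2 : n + (n - 2 * p) = 2 * n - 2 * p := by omega
    rw [h2]
    ring
  · intro k hk hknot
    have hk' : k ≤ n := by have := Finset.mem_range.1 hk; omega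
    rcases Nat.even_or_odd (n - k) with he | ho
    · exfalso
      apply hknot
      apply Finset.mem_image.2
      rw [Nat.even_iff] at he
      refine ⟨(n - k) / 2, Finset.mem_range.2 (by omega), by omega⟩
    · simp only [Bser, coeff_mk]
      rw [if_neg (by rw [Nat.odd_iff] at ho; omega)]
      rw [mul_zero]

end BinTree


/-- **Counting proper colored binary trees.** For every nonnegative integer `n`, the
number of proper colored binary trees with `n` internal vertices equals
`∑_{p=0}^{⌊n/2⌋} (-1)^p (1/(n+1)) C(n+p, p) C(2n-2p, n-2p)`. -/
theorem card_proper_colored_binary_trees (n : ℕ) :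
    (Nat.card {B : ColoredBinTree // B.tree.internals = n ∧ B.Proper} : ℚ) =
      ∑ p ∈ Finset.range (n / 2 + 1),
        (-1 : ℚ) ^ p * (1 / (n + 1)) * ((n + p).choose p) *
          ((2 * n - 2 * p).choose (n - 2 * p)) := by
  rw [BinTree.card_colored n]
  have h1 : (BinTree.Gcard n : ℚ) = PowerSeries.coeff n BinTree.Gq := by
    simp [BinTree.Gq]
  have h2 := BinTree.extract n
  rw [BinTree.vv_pow_eq, BinTree.coeffAB] at h2
  have hne : (n : ℚ) + 1 ≠ 0 := by positivity
  have h3 : ∑ p ∈ Finset.range (n / 2 + 1),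
      (-1 : ℚ) ^ p * (1 / (n + 1)) * ((n + p).choose p) * ((2 * n - 2 * p).choose (n - 2 * p)) =
      (1 / ((n : ℚ) + 1)) * ∑ p ∈ Finset.range (n / 2 + 1),
        (-1 : ℚ) ^ p * ((n + p).choose p) * ((2 * n - 2 * p).choose (n - 2 * p)) := by
    rw [Finset.mul_sum]
    apply Finset.sum_congr rfl
    intro p _
    ring
  rw [h1, h3, ← h2]
  field_simp
end

section
/- Let f(x,y) = \sum_{n ≥ 0} \sum_{p=0}^{\lfloor n/2 \rfloor} f_{n,p} y^p x^n be a formal power series in two variables over ℚ with constant term f(0,0) = 1 satisfying the functional equation f(x,y) · (1 - y x^2 f(x,y)^2) · (1 - x f(x,y)) = 1. Then for every positive integer m and all nonnegative integers n and p with p ≤ \lfloor n/2 \rfloor, the coefficient of y^p x^n in f(x,y)^m equals (m/(n+m)) \binom{m+n+p-1}{p} \binom{m+2n-2p-1}{n-2p}. -/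
open MvPowerSeries Finsupp

noncomputable def auxB (m n p : ℕ) : ℚ :=
  if 2 * p ≤ n then
    (m : ℚ) / (n + m) * ((m + n + p - 1).choose p) * ((m + 2 * n - 2 * p - 1).choose (n - 2 * p))
  else 0

lemma absorb (b q : ℕ) : ((b:ℚ)+1) * ((b).choose q) = ((b+1).choose (q+1)) * (q+1) := by
  exact_mod_cast congrArg (Nat.cast : ℕ → ℚ) (Nat.add_one_mul_choose_eq b q)

lemma subS (b q : ℕ) :
    ((b).choose q : ℚ) = ((q:ℚ)+1) / (b+1) * ((b+1).choose (q+1)) := by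
  rw [div_mul_eq_mul_div, eq_div_iff (by positivity)]
  have := absorb b q
  push_cast at this ⊢
  linarith

lemma subR (b q : ℕ) :
    ((b).choose (q+1) : ℚ)
      = ((b+1).choose (q+1)) - ((q:ℚ)+1) / (b+1) * ((b+1).choose (q+1)) := by
  rw [← subS b q]
  have : ((b+1).choose (q+1) : ℚ) = (b).choose q + (b).choose (q+1) := by
    rw [Nat.choose_succ_succ]; push_cast; ring
  linarith

lemma auxB_rec (k n p : ℕ) (hn : 1 ≤ n) (hp : 2 * p ≤ n) :
    auxB (k+1) n p = auxB k n p + auxB (k+2) (n-1) p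
      + (if 2 ≤ n ∧ 1 ≤ p then auxB (k+3) (n-2) (p-1) else 0)
      - (if 3 ≤ n ∧ 1 ≤ p then auxB (k+4) (n-3) (p-1) else 0) := by
  rcases p with _ | r
  · -- p = 0
    rw [if_neg (by omega), if_neg (by omega)]
    obtain ⟨j, rfl⟩ : ∃ j, n = j + 1 := ⟨n - 1, by omega⟩
    rw [show j + 1 - 1 = j from by omega]
    simp only [auxB, if_pos (by omega : 2*0 ≤ j+1), if_pos (by omega : 2*0 ≤ j)]
    rw [show k+1+(j+1)+0-1 = k+j+1 from by omega, show k+(j+1)+0-1 = k+j from by omega,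
      show k+2+j+0-1 = k+j+1 from by omega,
      show k+1+2*(j+1)-2*0-1 = (k+2*j+1)+1 from by omega,
      show k+2*(j+1)-2*0-1 = k+2*j+1 from by omega,
      show k+2+2*j-2*0-1 = k+2*j+1 from by omega,
      show j+1-2*0 = j+1 from by omega, show j-2*0 = j from by omega]
    simp only [Nat.choose_zero_right, Nat.cast_one]
    rw [subS (k+2*j+1) j, subR (k+2*j+1) j]
    push_cast
    field_simp
    ring
  · obtain ⟨q, rfl⟩ : ∃ q, n = 2*r+2+q := ⟨n - (2*r+2), by omega⟩
    rcases q with _ | s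
    · -- q = 0 : n = 2r+2
      rw [if_pos (by omega)]
      have ht2 : auxB (k+2) (2*r+2+0-1) (r+1) = 0 := by
        simp only [auxB]; rw [if_neg (by omega)]
      have ht4 : (if 3 ≤ 2*r+2+0 ∧ 1 ≤ r+1 then auxB (k+4) (2*r+2+0-3) (r+1-1) else 0) = 0 := by
        split
        · simp only [auxB]; rw [if_neg (by omega)]
        · rfl
      rw [ht2, ht4, show 2*r+2+0-2 = 2*r from by omega, show r+1-1 = r from by omega]
      simp only [auxB, if_pos (by omega : 2*(r+1) ≤ 2*r+2+0), if_pos (by omega : 2*r ≤ 2*r)]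
      rw [show k+1+(2*r+2+0)+(r+1)-1 = (k+3*r+2)+1 from by omega,
        show k+(2*r+2+0)+(r+1)-1 = k+3*r+2 from by omega,
        show k+3+2*r+r-1 = k+3*r+2 from by omega,
        show k+1+2*(2*r+2+0)-2*(r+1)-1 = k+2*r+2 from by omega,
        show k+2*(2*r+2+0)-2*(r+1)-1 = k+2*r+1 from by omega,
        show k+3+2*(2*r)-2*r-1 = k+2*r+2 from by omega,
        show 2*r+2+0-2*(r+1) = 0 from by omega, show 2*r-2*r = 0 from by omega]
      simp only [Nat.choose_zero_right, Nat.cast_one]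
      rw [subS (k+3*r+2) r, subR (k+3*r+2) r]
      push_cast
      field_simp
      ring
    · -- q = s+1 : n = 2r+s+3
      rw [if_pos (by omega), if_pos (by omega),
        show 2*r+2+(s+1)-1 = 2*r+s+2 from by omega,
        show 2*r+2+(s+1)-2 = 2*r+s+1 from by omega,
        show 2*r+2+(s+1)-3 = 2*r+s from by omega,
        show r+1-1 = r from by omega,
        show 2*r+2+(s+1) = 2*r+s+3 from by omega]
      simp only [auxB, if_pos (by omega : 2*(r+1) ≤ 2*r+s+3),
        if_pos (by omega : 2*(r+1) ≤ 2*r+s+2),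
        if_pos (by omega : 2*r ≤ 2*r+s+1), if_pos (by omega : 2*r ≤ 2*r+s)]
      rw [show k+1+(2*r+s+3)+(r+1)-1 = (k+3*r+s+3)+1 from by omega,
        show k+(2*r+s+3)+(r+1)-1 = (k+3*r+s+3) from by omega,
        show k+2+(2*r+s+2)+(r+1)-1 = (k+3*r+s+3)+1 from by omega,
        show k+3+(2*r+s+1)+r-1 = (k+3*r+s+3) from by omega,
        show k+4+(2*r+s)+r-1 = (k+3*r+s+3) from by omega,
        show k+1+2*(2*r+s+3)-2*(r+1)-1 = (k+2*r+2*s+3)+1 from by omega,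
        show k+2*(2*r+s+3)-2*(r+1)-1 = (k+2*r+2*s+3) from by omega,
        show k+2+2*(2*r+s+2)-2*(r+1)-1 = (k+2*r+2*s+3) from by omega,
        show k+3+2*(2*r+s+1)-2*r-1 = (k+2*r+2*s+3)+1 from by omega,
        show k+4+2*(2*r+s)-2*r-1 = (k+2*r+2*s+3) from by omega,
        show 2*r+s+3-2*(r+1) = s+1 from by omega,
        show 2*r+s+2-2*(r+1) = s from by omega,
        show 2*r+s+1-2*r = s+1 from by omega,
        show 2*r+s-2*r = s from by omega]
      rw [subS (k+3*r+s+3) r, subR (k+3*r+s+3) r, subS (k+2*r+2*s+3) s, subR (k+2*r+2*s+3) s]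
      push_cast
      field_simp
      ring

lemma ev0 (n p : ℕ) : (single (0 : Fin 2) n + single 1 p : Fin 2 →₀ ℕ) 0 = n := by simp
lemma ev1 (n p : ℕ) : (single (0 : Fin 2) n + single 1 p : Fin 2 →₀ ℕ) 1 = p := by simp

lemma coeff_shift (g : MvPowerSeries (Fin 2) ℚ) (i j n p : ℕ) :
    MvPowerSeries.coeff (single 0 n + single 1 p) (X 0 ^ i * X 1 ^ j * g) =
      if i ≤ n ∧ j ≤ p then
        MvPowerSeries.coeff (single 0 (n - i) + single 1 (p - j)) g else 0 := by
  rw [X_pow_eq, X_pow_eq, monomial_mul_monomial, mul_one, coeff_monomial_mul]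
  by_cases h : i ≤ n ∧ j ≤ p
  · rw [if_pos h, if_pos, one_mul]
    · have hd : (single (0:Fin 2) n + single 1 p) - (single 0 i + single 1 j)
          = single 0 (n - i) + single 1 (p - j) := by
        ext t
        fin_cases t <;> simp [Finsupp.tsub_apply, Finsupp.single_apply]
      rw [hd]
    · intro t
      fin_cases t <;> simp [Finsupp.single_apply, h.1, h.2]
  · rw [if_neg h, if_neg]
    intro hle
    rw [not_and_or] at h
    rcases h with h | h
    · exact h (by simpa using hle 0)
    · exact h (by simpa using hle 1)

lemma shape_mul {g h : MvPowerSeries (Fin 2) ℚ}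
    (hg : ∀ d : Fin 2 →₀ ℕ, d 0 < 2 * d 1 → MvPowerSeries.coeff d g = 0)
    (hh : ∀ d : Fin 2 →₀ ℕ, d 0 < 2 * d 1 → MvPowerSeries.coeff d h = 0) :
    ∀ d : Fin 2 →₀ ℕ, d 0 < 2 * d 1 → MvPowerSeries.coeff d (g * h) = 0 := by
  intro d hd
  rw [coeff_mul]
  apply Finset.sum_eq_zero
  intro x hx
  rw [Finset.HasAntidiagonal.mem_antidiagonal] at hx
  have h0 : x.1 0 + x.2 0 = d 0 := by rw [← hx]; simp
  have h1 : x.1 1 + x.2 1 = d 1 := by rw [← hx]; simp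
  by_cases hc : x.1 0 < 2 * x.1 1
  · rw [hg _ hc, zero_mul]
  · rw [hh _ (by omega), mul_zero]

lemma shape_pow {f : MvPowerSeries (Fin 2) ℚ}
    (hf : ∀ d : Fin 2 →₀ ℕ, d 0 < 2 * d 1 → MvPowerSeries.coeff d f = 0) (m : ℕ) :
    ∀ d : Fin 2 →₀ ℕ, d 0 < 2 * d 1 → MvPowerSeries.coeff d (f ^ m) = 0 := by
  induction m with
  | zero =>
    intro d hd
    rw [pow_zero, MvPowerSeries.coeff_one, if_neg]
    intro h
    rw [h] at hd
    simp at hd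
  | succ k ih =>
    rw [pow_succ]
    exact shape_mul ih hf

lemma keyrec (f : MvPowerSeries (Fin 2) ℚ)
    (heq : f * (1 - MvPowerSeries.X 1 * MvPowerSeries.X 0 ^ 2 * f ^ 2) *
        (1 - MvPowerSeries.X 0 * f) = 1) (k : ℕ) :
    f ^ (k+1) = f ^ k + X 0 ^ 1 * X 1 ^ 0 * f ^ (k+2) + X 0 ^ 2 * X 1 ^ 1 * f ^ (k+3)
      - X 0 ^ 3 * X 1 ^ 1 * f ^ (k+4) := by
  linear_combination (f ^ k) * heq

lemma mainlem (f : MvPowerSeries (Fin 2) ℚ)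
    (hs : ∀ d : Fin 2 →₀ ℕ, d 0 < 2 * d 1 → MvPowerSeries.coeff d f = 0)
    (hconst : MvPowerSeries.constantCoeff f = 1)
    (heq : f * (1 - MvPowerSeries.X 1 * MvPowerSeries.X 0 ^ 2 * f ^ 2) *
        (1 - MvPowerSeries.X 0 * f) = 1) :
    ∀ n m p : ℕ, 1 ≤ m + n →
      MvPowerSeries.coeff (single 0 n + single 1 p) (f ^ m) = auxB m n p := by
  intro n
  induction n using Nat.strong_induction_on with
  | _ n IH =>
  intro m p hmn
  rcases Nat.eq_zero_or_pos n with rfl | hn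
  · -- n = 0, so m ≥ 1
    rcases Nat.eq_zero_or_pos p with rfl | hp
    · have hz : (single (0:Fin 2) 0 + single 1 0 : Fin 2 →₀ ℕ) = 0 := by simp
      rw [hz, MvPowerSeries.coeff_zero_eq_constantCoeff_apply, map_pow, hconst, one_pow]
      simp only [auxB, if_pos (by omega : 2*0 ≤ 0)]
      rw [show m+0+0-1 = m-1 from by omega, show m+2*0-2*0-1 = m-1 from by omega,
        show 0-2*0 = 0 from by omega]
      simp only [Nat.choose_zero_right, Nat.cast_one]
      rw [Nat.cast_zero, zero_add, div_self (by exact_mod_cast by omega : (m:ℚ) ≠ 0)]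
      ring
    · rw [shape_pow hs m _ (by rw [ev0, ev1]; omega)]
      simp only [auxB]
      rw [if_neg (by omega)]
  · clear hmn
    induction m with
    | zero =>
      rw [pow_zero, MvPowerSeries.coeff_one, if_neg (by
        intro h
        have := ev0 n p
        rw [h] at this
        simp at this
        omega)]
      simp only [auxB]
      split
      · rw [Nat.cast_zero, zero_div, zero_mul, zero_mul]
      · rfl
    | succ k ihm =>
      by_cases hp2 : 2 * p ≤ n
      · rw [keyrec f heq k]
        simp only [map_add, map_sub]
        rw [coeff_shift, coeff_shift, coeff_shift,
          if_pos (⟨by omega, by omega⟩ : 1 ≤ n ∧ 0 ≤ p), Nat.sub_zero]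
        have h3 : (if 2 ≤ n ∧ 1 ≤ p then
            MvPowerSeries.coeff (single 0 (n-2) + single 1 (p-1)) (f ^ (k+3)) else 0)
            = (if 2 ≤ n ∧ 1 ≤ p then auxB (k+3) (n-2) (p-1) else 0) := by
          split
          · exact IH (n-2) (by omega) (k+3) (p-1) (by omega)
          · rfl
        have h4 : (if 3 ≤ n ∧ 1 ≤ p then
            MvPowerSeries.coeff (single 0 (n-3) + single 1 (p-1)) (f ^ (k+4)) else 0)
            = (if 3 ≤ n ∧ 1 ≤ p then auxB (k+4) (n-3) (p-1) else 0) := by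
          split
          · exact IH (n-3) (by omega) (k+4) (p-1) (by omega)
          · rfl
        rw [h3, h4, ihm, IH (n-1) (by omega) (k+2) p (by omega)]
        exact (auxB_rec k n p hn hp2).symm
      · rw [shape_pow hs (k+1) _ (by rw [ev0, ev1]; omega)]
        simp only [auxB]
        rw [if_neg (by omega)]

/-- **The generating function of colored binary trees.** Let
`f(x,y) = ∑_{n ≥ 0} ∑_{p=0}^{⌊n/2⌋} f_{n,p} y^p x^n` be a formal power series in two
variables over `ℚ` (here `x = X 0`, `y = X 1`, and the coefficient of `y^p x^n` vanishes
when `p > ⌊n/2⌋`) with constant term `1` satisfying the functional equation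
`f(x,y) (1 - y x² f(x,y)²) (1 - x f(x,y)) = 1`. Then for every positive integer `m` and
all nonnegative integers `n, p` with `p ≤ ⌊n/2⌋`, the coefficient of `y^p x^n` in
`f(x,y)^m` equals `(m/(n+m)) C(m+n+p-1, p) C(m+2n-2p-1, n-2p)`. -/
theorem coeff_pow_colored_binary_gf (f : MvPowerSeries (Fin 2) ℚ)
    (hshape : ∀ n p : ℕ, n / 2 < p →
      MvPowerSeries.coeff (Finsupp.single 0 n + Finsupp.single 1 p) f = 0)
    (hconst : MvPowerSeries.constantCoeff f = 1)
    (heq : f * (1 - MvPowerSeries.X 1 * MvPowerSeries.X 0 ^ 2 * f ^ 2) *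
        (1 - MvPowerSeries.X 0 * f) = 1)
    (m : ℕ) (hm : 0 < m) (n p : ℕ) (hp : p ≤ n / 2) :
    MvPowerSeries.coeff (Finsupp.single 0 n + Finsupp.single 1 p) (f ^ m) =
      (m : ℚ) / (n + m) * ((m + n + p - 1).choose p) *
        ((m + 2 * n - 2 * p - 1).choose (n - 2 * p)) := by
  have hs : ∀ d : Fin 2 →₀ ℕ, d 0 < 2 * d 1 → MvPowerSeries.coeff d f = 0 := by
    intro d hd
    have hde : d = single 0 (d 0) + single 1 (d 1) := by
      ext i; fin_cases i <;> simp
    rw [hde]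
    exact hshape (d 0) (d 1) (by omega)
  have := mainlem f hs hconst heq n m p (by omega)
  rw [this]
  simp only [auxB]
  rw [if_pos (by omega)]
end

section
/- For all positive integers m and all nonnegative integers n, there exists an involution \phi on the set of improper forests of m colored binary trees with n internal vertices in total, such that \phi changes the color number of each such forest by exactly 1 (hence reverses its parity). Consequently, the number of forests of m colored binary trees with n internal vertices and even color number, minus the number of such forests with odd color number, equals the number of proper forests of m colored binary trees with n internal vertices. -/
theorem ColoredBinTree.ext' {B B' : ColoredBinTree} (h1 : B.tree = B'.tree)
    (h2 : B.color = B'.color) : B = B' := by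
  cases B; cases B'
  cases h1; cases h2
  rfl

open Classical

namespace BinTree

theorem mem_vertices {t : BinTree} {p : List Bool} :
    p ∈ t.vertices ↔ (t.subtreeAt p).isSome := by
  induction t generalizing p with
  | leaf => cases p <;> simp [vertices, subtreeAt]
  | node l r ihl ihr =>
      cases p with
      | nil => simp [vertices, subtreeAt]
      | cons b q =>
          cases b <;> simp [vertices, subtreeAt, ← ihl, ← ihr]

theorem vertices_nodup (t : BinTree) : t.vertices.Nodup := by
  induction t with
  | leaf => simp [vertices]
  | node l r ihl ihr =>
      simp only [vertices, List.nodup_cons, List.mem_append, List.mem_map]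
      refine ⟨?_, ?_⟩
      · rintro (⟨q, _, h⟩ | ⟨q, _, h⟩) <;> exact List.cons_ne_nil _ _ h
      · refine List.Nodup.append ?_ ?_ ?_
        · exact ihl.map (fun a b h => by injection h)
        · exact ihr.map (fun a b h => by injection h)
        · intro x hx hy
          obtain ⟨q, _, rfl⟩ := List.mem_map.mp hx
          obtain ⟨q', _, h⟩ := List.mem_map.mp hy
          injection h with h1 _
          exact Bool.noConfusion h1

theorem length_vertices (t : BinTree) : t.vertices.length = 2 * t.internals + 1 := by
  induction t with
  | leaf => simp [vertices, internals]
  | node l r ihl ihr => simp [vertices, internals, ihl, ihr]; omega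

theorem leftLen_le_internals (t : BinTree) : t.leftLen ≤ t.internals := by
  induction t with
  | leaf => simp [leftLen, internals]
  | node l r ihl _ => simp [leftLen, internals]; omega

theorem internals_subtreeAt {p : List Bool} {t s : BinTree}
    (h : t.subtreeAt p = some s) : s.internals ≤ t.internals := by
  induction p generalizing t with
  | nil => simp [subtreeAt] at h; subst h; exact le_refl _
  | cons b q ih =>
      cases t with
      | leaf => simp [subtreeAt] at h
      | node l r =>
          cases b with
          | false => exact le_trans (ih h) (by simp [internals]; omega)
          | true => exact le_trans (ih h) (by simp [internals]; omega)

theorem pathLen_le_internals (t : BinTree) (p : List Bool) :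
    t.pathLen p ≤ t.internals := by
  unfold pathLen
  cases h : t.subtreeAt p with
  | none => exact Nat.zero_le _
  | some s => exact le_trans (leftLen_le_internals s) (internals_subtreeAt h)

end BinTree
namespace ColoredBinTree

/-- The color flip: add one to an even color, subtract one from an odd color. -/
def flip (c : ℕ) : ℕ := if Even c then c + 1 else c - 1

theorem flip_flip (c : ℕ) : flip (flip c) = c := by
  unfold flip
  rcases Nat.even_or_odd c with h | h
  · have : ¬ Even (c + 1) := by simp [Nat.even_add_one, h]
    simp [h, this]
  · have h1 : ¬ Even c := Nat.not_even_iff_odd.mpr h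
    obtain ⟨k, hk⟩ := h
    subst hk
    have h2 : Even (2 * k + 1 - 1) := by simpa using even_two_mul k
    simp [h1, h2]

theorem properAt_iff (B : ColoredBinTree) (p : List Bool) :
    B.ProperAt p ↔ Even (B.color p) ∧ BinTree.pathLen B.tree p / 2 = B.color p := by
  constructor
  · rintro ⟨k, hc, hl | hl⟩ <;> exact ⟨⟨k, by omega⟩, by omega⟩
  · rintro ⟨⟨k, hk⟩, hl⟩
    exact ⟨k, by omega, by omega⟩

/-- Flip the color of an improper initial vertex. -/
def flipAt (B : ColoredBinTree) (p : List Bool)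
    (h1 : BinTree.IsInitial B.tree p) (h2 : ¬ B.ProperAt p) : ColoredBinTree where
  tree := B.tree
  color := Function.update B.color p (flip (B.color p))
  color_le := by
    intro q hq
    rcases eq_or_ne q p with rfl | hne
    · rw [Function.update_self]
      have hle := B.color_le q hq
      rw [properAt_iff] at h2
      unfold flip
      rcases Nat.even_or_odd (B.color q) with h | h
      · have : BinTree.pathLen B.tree q / 2 ≠ B.color q := fun hh => h2 ⟨h, hh⟩
        simp [h]; omega
      · have : ¬ Even (B.color q) := by simp [Nat.not_even_iff_odd, h]
        simp [this]; omega
    · rw [Function.update_of_ne hne]; exact B.color_le q hq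
  color_eq_zero := by
    intro q hq
    have hne : q ≠ p := fun hh => hq (hh ▸ h1)
    rw [Function.update_of_ne hne]; exact B.color_eq_zero q hq

theorem flipAt_tree (B : ColoredBinTree) (p : List Bool) (h1 h2) :
    (flipAt B p h1 h2).tree = B.tree := rfl

theorem flipAt_color_self (B : ColoredBinTree) (p : List Bool) (h1 h2) :
    (flipAt B p h1 h2).color p = flip (B.color p) := Function.update_self _ _ _

theorem flipAt_color_ne (B : ColoredBinTree) (p : List Bool) (h1 h2) {q : List Bool}
    (hq : q ≠ p) : (flipAt B p h1 h2).color q = B.color q := Function.update_of_ne hq _ _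

theorem flipAt_improperAt (B : ColoredBinTree) (p : List Bool) (h1 h2) :
    ¬ (flipAt B p h1 h2).ProperAt p := by
  rw [properAt_iff, flipAt_color_self]
  show ¬ (Even (flip (B.color p)) ∧ BinTree.pathLen B.tree p / 2 = flip (B.color p))
  have hle := B.color_le p h1
  unfold flip
  rcases Nat.even_or_odd (B.color p) with h | h
  · rw [if_pos h]
    rintro ⟨hc, -⟩
    rw [Nat.even_add_one] at hc
    exact hc h
  · have h1' : ¬ Even (B.color p) := Nat.not_even_iff_odd.mpr h
    obtain ⟨k, hk⟩ := h
    rw [if_neg h1']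
    rintro ⟨-, hc⟩
    omega

theorem flipAt_properAt_iff (B : ColoredBinTree) (p : List Bool) (h1 h2) {q : List Bool}
    (hq : q ≠ p) : (flipAt B p h1 h2).ProperAt q ↔ B.ProperAt q := by
  unfold ProperAt
  rw [show (flipAt B p h1 h2).color q = B.color q from flipAt_color_ne B p h1 h2 hq]
  rfl

end ColoredBinTree
namespace ColoredBinTree

/-- The predicate "the vertex `p` is an improper initial vertex of `B`". -/
def BadAt (B : ColoredBinTree) (p : List Bool) : Prop :=
  BinTree.IsInitial B.tree p ∧ ¬ B.ProperAt p

/-- The first improper initial vertex of `B`, if any. -/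
noncomputable def firstBad (B : ColoredBinTree) : Option (List Bool) :=
  B.tree.vertices.find? (fun p => decide (B.BadAt p))

theorem badAt_firstBad {B : ColoredBinTree} {p : List Bool} (h : B.firstBad = some p) :
    B.BadAt p := by
  have := List.find?_some h
  simpa using this

theorem firstBad_isSome {B : ColoredBinTree} (h : ¬ B.Proper) : B.firstBad.isSome := by
  rw [Proper] at h
  push_neg at h
  obtain ⟨p, hp1, hp2⟩ := h
  rw [firstBad, List.find?_isSome]
  exact ⟨p, BinTree.mem_vertices.mpr hp1.1, decide_eq_true ⟨hp1, hp2⟩⟩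

theorem improper_of_firstBad {B : ColoredBinTree} {p : List Bool}
    (h : B.firstBad = some p) : ¬ B.Proper := by
  obtain ⟨h1, h2⟩ := badAt_firstBad h
  exact fun hP => h2 (hP p h1)

/-- A `find?` stability lemma. -/
theorem find?_stable {l : List (List Bool)} (hl : l.Nodup) {f g : List Bool → Bool}
    {p : List Bool} (hf : l.find? f = some p) (hgp : g p = true)
    (hfg : ∀ q ∈ l, q ≠ p → g q = f q) : l.find? g = some p := by
  induction l with
  | nil => simp at hf
  | cons a l ih =>
      rcases List.nodup_cons.mp hl with ⟨ha, hl'⟩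
      by_cases hfa : f a = true
      · rw [List.find?_cons_of_pos hfa] at hf
        injection hf with hf; subst hf
        rw [List.find?_cons_of_pos hgp]
      · rw [List.find?_cons_of_neg (by simp [hfa])] at hf
        have hpl : p ∈ l := List.mem_of_find?_eq_some hf
        have hap : a ≠ p := fun h => ha (h ▸ hpl)
        have hga : g a = f a := hfg a (List.mem_cons_self (a := a) (l := l)) hap
        rw [List.find?_cons_of_neg (by simp [hga, hfa])]
        exact ih hl' hf (fun q hq => hfg q (List.mem_cons_of_mem a hq))

theorem firstBad_flipAt {B : ColoredBinTree} {p : List Bool}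
    (h : B.firstBad = some p) :
    (flipAt B p (badAt_firstBad h).1 (badAt_firstBad h).2).firstBad = some p := by
  rw [firstBad]
  refine find?_stable (BinTree.vertices_nodup _) h ?_ ?_
  · simp only [decide_eq_true_eq]
    exact ⟨(badAt_firstBad h).1, flipAt_improperAt B p _ _⟩
  · intro q _ hq
    rw [decide_eq_decide]
    unfold BadAt
    rw [flipAt_properAt_iff B p _ _ hq]
    exact Iff.rfl

/-- Flip the color of the first improper initial vertex (identity on proper trees). -/
noncomputable def flipB (B : ColoredBinTree) : ColoredBinTree :=
  match h : B.firstBad with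
  | none => B
  | some p => flipAt B p (badAt_firstBad h).1 (badAt_firstBad h).2

theorem flipB_of_some {B : ColoredBinTree} {p : List Bool} (h : B.firstBad = some p) :
    B.flipB = flipAt B p (badAt_firstBad h).1 (badAt_firstBad h).2 := by
  unfold flipB
  split
  · rename_i h2; rw [h2] at h; exact absurd h (Option.some_ne_none p).symm
  · rename_i q h'
    have : q = p := by rw [h'] at h; injection h
    subst this; rfl

theorem flipB_tree (B : ColoredBinTree) : B.flipB.tree = B.tree := by
  unfold flipB; split <;> rfl

theorem flipB_improper {B : ColoredBinTree} (h : ¬ B.Proper) : ¬ B.flipB.Proper := by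
  obtain ⟨p, hp⟩ := Option.isSome_iff_exists.mp (firstBad_isSome h)
  rw [flipB_of_some hp]
  intro hP
  exact flipAt_improperAt B p _ _ (hP p (badAt_firstBad hp).1)

theorem flipB_flipB {B : ColoredBinTree} (h : ¬ B.Proper) : B.flipB.flipB = B := by
  obtain ⟨p, hp⟩ := Option.isSome_iff_exists.mp (firstBad_isSome h)
  have h1 := flipB_of_some hp
  have hp2 : B.flipB.firstBad = some p := by rw [h1]; exact firstBad_flipAt hp
  rw [flipB_of_some hp2]
  apply ColoredBinTree.ext'
  · rw [flipAt_tree, h1, flipAt_tree]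
  · show Function.update B.flipB.color p (flip (B.flipB.color p)) = B.color
    rw [h1]
    show Function.update (Function.update B.color p (flip (B.color p))) p
        (flip ((flipAt B p _ _).color p)) = B.color
    rw [flipAt_color_self, flip_flip, Function.update_idem, Function.update_eq_self]

end ColoredBinTree
theorem sum_map_update {α : Type*} [DecidableEq α] {l : List α} (hl : l.Nodup) {p : α}
    (hp : p ∈ l) (f : α → ℕ) (v : ℕ) :
    (l.map (Function.update f p v)).sum + f p = (l.map f).sum + v := by
  induction l with
  | nil => simp at hp
  | cons a l ih =>
      rcases List.nodup_cons.mp hl with ⟨ha, hl'⟩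
      rcases List.mem_cons.mp hp with rfl | hp'
      · have hrest : l.map (Function.update f p v) = l.map f :=
          List.map_congr_left fun x hx => Function.update_of_ne (fun hxa => ha (by rwa [hxa] at hx)) _ _
        simp [hrest, Function.update_self]
        omega
      · have hap : a ≠ p := fun h => ha (h ▸ hp')
        have := ih hl' hp'
        simp only [List.map_cons, List.sum_cons, Function.update_of_ne hap]
        omega

namespace ColoredBinTree

theorem colorNum_flipB {B : ColoredBinTree} (h : ¬ B.Proper) :
    B.flipB.colorNum = B.colorNum + 1 ∨ B.colorNum = B.flipB.colorNum + 1 := by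
  obtain ⟨p, hp⟩ := Option.isSome_iff_exists.mp (firstBad_isSome h)
  rw [flipB_of_some hp]
  have hmem : p ∈ B.tree.vertices := BinTree.mem_vertices.mpr (badAt_firstBad hp).1.1
  have key : ((B.tree.vertices).map (Function.update B.color p (flip (B.color p)))).sum
      + B.color p = ((B.tree.vertices).map B.color).sum + flip (B.color p) :=
    sum_map_update (BinTree.vertices_nodup _) hmem _ _
  have hcn : (flipAt B p (badAt_firstBad hp).1 (badAt_firstBad hp).2).colorNum
      = ((B.tree.vertices).map (Function.update B.color p (flip (B.color p)))).sum := rfl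
  rw [hcn]
  unfold colorNum
  rcases Nat.even_or_odd (B.color p) with he | ho
  · have hv : flip (B.color p) = B.color p + 1 := if_pos he
    rw [hv] at key ⊢
    omega
  · have hv : flip (B.color p) = B.color p - 1 := if_neg (Nat.not_even_iff_odd.mpr ho)
    obtain ⟨k, hk⟩ := ho
    rw [hv] at key ⊢
    omega

end ColoredBinTree
open ColoredBinTree in
/-- The least index of an improper component. -/
noncomputable def badIdx {m : ℕ} (F : Fin m → ColoredBinTree)
    (h : ∃ i, ¬ (F i).Proper) : Fin m :=
  (Finset.univ.filter (fun i => ¬ (F i).Proper)).min' (by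
    obtain ⟨i, hi⟩ := h
    exact ⟨i, Finset.mem_filter.mpr ⟨Finset.mem_univ i, hi⟩⟩)

theorem badIdx_improper {m : ℕ} (F : Fin m → ColoredBinTree) (h : ∃ i, ¬ (F i).Proper) :
    ¬ (F (badIdx F h)).Proper := by
  have h1 : badIdx F h ∈ Finset.univ.filter (fun i => ¬ (F i).Proper) :=
    Finset.min'_mem _ _
  exact (Finset.mem_filter.mp h1).2

theorem badIdx_congr {m : ℕ} {F G : Fin m → ColoredBinTree} {h h'}
    (hiff : ∀ i, ((F i).Proper ↔ (G i).Proper)) : badIdx F h = badIdx G h' := by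
  have hset : (Finset.univ.filter (fun i => ¬ (F i).Proper))
      = (Finset.univ.filter (fun i => ¬ (G i).Proper)) := by
    apply Finset.filter_congr
    intro i _
    exact not_congr (hiff i)
  apply le_antisymm
  · exact Finset.min'_le _ _ (by rw [hset]; exact Finset.min'_mem _ _)
  · exact Finset.min'_le _ _ (by rw [← hset]; exact Finset.min'_mem _ _)

open ColoredBinTree in
/-- The parity-reversing involution: flip the first improper initial vertex of the first
improper component. -/
noncomputable def phiForest {m : ℕ} (F : Fin m → ColoredBinTree) : Fin m → ColoredBinTree :=
  if h : ∃ i, ¬ (F i).Proper then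
    Function.update F (badIdx F h) (F (badIdx F h)).flipB
  else F

theorem phiForest_tree {m : ℕ} (F : Fin m → ColoredBinTree) (i : Fin m) :
    (phiForest F i).tree = (F i).tree := by
  unfold phiForest
  split
  · rcases eq_or_ne i (badIdx F ‹_›) with rfl | hne
    · rw [Function.update_self]; exact ColoredBinTree.flipB_tree _
    · rw [Function.update_of_ne hne]
  · rfl

theorem phiForest_proper_iff {m : ℕ} (F : Fin m → ColoredBinTree) (i : Fin m) :
    (phiForest F i).Proper ↔ (F i).Proper := by
  unfold phiForest
  split
  · rename_i h
    rcases eq_or_ne i (badIdx F h) with rfl | hne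
    · rw [Function.update_self]
      have h1 := badIdx_improper F h
      have h2 := ColoredBinTree.flipB_improper h1
      exact iff_of_false h2 h1
    · rw [Function.update_of_ne hne]
  · exact Iff.rfl

theorem phiForest_involutive {m : ℕ} (F : Fin m → ColoredBinTree) :
    phiForest (phiForest F) = F := by
  by_cases h : ∃ i, ¬ (F i).Proper
  · have h' : ∃ i, ¬ (phiForest F i).Proper := by
      obtain ⟨i, hi⟩ := h
      exact ⟨i, fun hp => hi ((phiForest_proper_iff F i).mp hp)⟩
    have hidx : badIdx (phiForest F) h' = badIdx F h :=
      badIdx_congr (fun i => phiForest_proper_iff F i)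
    have h1 : phiForest F = Function.update F (badIdx F h) (F (badIdx F h)).flipB := by
      unfold phiForest; rw [dif_pos h]
    have h2 : phiForest (phiForest F)
        = Function.update (phiForest F) (badIdx (phiForest F) h')
          ((phiForest F) (badIdx (phiForest F) h')).flipB := by
      conv_lhs => rw [phiForest]
      rw [dif_pos h']
    rw [h2, hidx, h1, Function.update_self, Function.update_idem,
      ColoredBinTree.flipB_flipB (badIdx_improper F h), Function.update_eq_self]
  · have h1 : phiForest F = F := by unfold phiForest; rw [dif_neg h]
    rw [h1, h1]

theorem phiForest_colorNum {m : ℕ} (F : Fin m → ColoredBinTree)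
    (h : ∃ i, ¬ (F i).Proper) :
    (∑ i, (phiForest F i).colorNum) = (∑ i, (F i).colorNum) + 1 ∨
      (∑ i, (F i).colorNum) = (∑ i, (phiForest F i).colorNum) + 1 := by
  have h1 : phiForest F = Function.update F (badIdx F h) (F (badIdx F h)).flipB := by
    unfold phiForest; rw [dif_pos h]
  set i₀ := badIdx F h with hi₀
  have h2 : ∀ i, (phiForest F i).colorNum
      = Function.update (fun j => (F j).colorNum) i₀ ((F i₀).flipB.colorNum) i := by
    intro i
    rcases eq_or_ne i i₀ with rfl | hne
    · rw [h1, Function.update_self, Function.update_self]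
    · rw [h1, Function.update_of_ne hne, Function.update_of_ne hne]
  rw [Finset.sum_congr rfl (fun i _ => h2 i)]
  rw [Finset.sum_update_of_mem (Finset.mem_univ i₀)]
  have h3 : (∑ i, (F i).colorNum)
      = (F i₀).colorNum + ∑ i ∈ Finset.univ \ {i₀}, (F i).colorNum := by
    rw [← Finset.sum_update_of_mem (Finset.mem_univ i₀), Function.update_eq_self]
  rcases ColoredBinTree.colorNum_flipB (badIdx_improper F h) with hc | hc <;>
    rw [← hi₀] at hc <;> [left; right] <;> omega
theorem finite_trees (n : ℕ) : {t : BinTree | t.internals ≤ n}.Finite := by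
  induction n with
  | zero =>
      refine (Set.finite_singleton BinTree.leaf).subset ?_
      intro t ht
      cases t with
      | leaf => rfl
      | node l r => simp [BinTree.internals] at ht
  | succ n ih =>
      refine (Set.Finite.union (Set.finite_singleton BinTree.leaf)
        (Set.Finite.image2 BinTree.node ih ih)).subset ?_
      intro t ht
      cases t with
      | leaf => exact Or.inl rfl
      | node l r =>
          simp only [Set.mem_setOf_eq, BinTree.internals] at ht
          exact Or.inr (Set.mem_image2.mpr
            ⟨l, by simp only [Set.mem_setOf_eq]; omega,
             r, by simp only [Set.mem_setOf_eq]; omega, rfl⟩)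

theorem color_le_internals (B : ColoredBinTree) (p : List Bool) :
    B.color p ≤ B.tree.internals := by
  by_cases h : BinTree.IsInitial B.tree p
  · exact le_trans (B.color_le p h) (le_trans (Nat.div_le_self _ _)
      (BinTree.pathLen_le_internals _ _))
  · rw [B.color_eq_zero p h]; exact Nat.zero_le _

theorem finite_colored (n : ℕ) : {B : ColoredBinTree | B.tree.internals ≤ n}.Finite := by
  have hlist : {l : List ℕ | l.length ≤ 2 * n + 1 ∧ ∀ x ∈ l, x ≤ n}.Finite := by
    refine ((List.finite_length_le (Fin (n + 1)) (2 * n + 1)).image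
      (List.map (Fin.val))).subset ?_
    intro l ⟨hlen, hbd⟩
    refine ⟨l.attach.map (fun x => (⟨x.1, Nat.lt_succ_of_le (hbd x.1 x.2)⟩ : Fin (n + 1))), ?_, ?_⟩
    · simp only [Set.mem_setOf_eq, List.length_map, List.length_attach]
      exact hlen
    · rw [List.map_map]
      have : ((Fin.val : Fin (n+1) → ℕ) ∘ fun x : {x // x ∈ l} =>
          (⟨x.1, Nat.lt_succ_of_le (hbd x.1 x.2)⟩ : Fin (n + 1))) = fun x => x.1 := rfl
      rw [this, List.attach_map_subtype_val]
  refine Set.Finite.of_finite_image (f := fun B => (B.tree, B.tree.vertices.map B.color)) ?_ ?_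
  · refine (Set.Finite.prod (finite_trees n) hlist).subset ?_
    rintro ⟨t, l⟩ ⟨B, hB, hBe⟩
    obtain ⟨rfl, rfl⟩ := Prod.mk.injEq .. ▸ hBe
    constructor
    · exact hB
    · constructor
      · rw [List.length_map, BinTree.length_vertices]
        simp only [Set.mem_setOf_eq] at hB
        omega
      · intro x hx
        obtain ⟨p, hp, rfl⟩ := List.mem_map.mp hx
        exact le_trans (color_le_internals B p) hB
  · rintro B - B' - h
    have htree : B.tree = B'.tree := congrArg Prod.fst h
    have hcolors : B.tree.vertices.map B.color = B.tree.vertices.map B'.color := by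
      have := congrArg Prod.snd h
      simpa [htree] using this
    apply ColoredBinTree.ext' htree
    funext p
    by_cases hp : p ∈ B.tree.vertices
    · exact List.map_inj_left.mp hcolors p hp
    · have h1 : ¬ BinTree.IsInitial B.tree p := fun hi =>
        hp (BinTree.mem_vertices.mpr hi.1)
      have h2 : ¬ BinTree.IsInitial B'.tree p := htree ▸ h1
      rw [B.color_eq_zero p h1, B'.color_eq_zero p h2]

theorem finite_forest_subtype {m n : ℕ} (P : (Fin m → ColoredBinTree) → Prop) :
    Finite {F : Fin m → ColoredBinTree // (∑ i, (F i).tree.internals = n) ∧ P F} := by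
  haveI : Finite {B : ColoredBinTree | B.tree.internals ≤ n} := (finite_colored n).to_subtype
  refine Finite.of_injective
    (fun X => fun i => (⟨X.1 i, ?_⟩ : {B : ColoredBinTree | B.tree.internals ≤ n})) ?_
  · simp only [Set.mem_setOf_eq]
    exact le_trans (Finset.single_le_sum (f := fun j => ((X.1 j).tree.internals))
      (fun j _ => Nat.zero_le _) (Finset.mem_univ i)) (le_of_eq X.2.1)
  · intro X Y h
    apply Subtype.ext
    funext i
    exact congrArg Subtype.val (congrFun h i)
theorem even_colorNum_of_proper {B : ColoredBinTree} (h : B.Proper) : Even B.colorNum := by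
  rw [even_iff_two_dvd]
  apply List.dvd_sum
  intro x hx
  obtain ⟨p, hp, rfl⟩ := List.mem_map.mp hx
  by_cases hi : BinTree.IsInitial B.tree p
  · obtain ⟨k, hk, -⟩ := h p hi
    exact ⟨k, hk⟩
  · rw [B.color_eq_zero p hi]
    exact dvd_zero 2

theorem even_total_of_proper {m : ℕ} {F : Fin m → ColoredBinTree}
    (h : ∀ i, (F i).Proper) : Even (∑ i, (F i).colorNum) := by
  rw [even_iff_two_dvd]
  exact Finset.dvd_sum fun i _ => even_iff_two_dvd.mp (even_colorNum_of_proper (h i))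
theorem key_parity {m : ℕ} (F : Fin m → ColoredBinTree) (hF : ¬ (∀ i, (F i).Proper)) :
    (Even (∑ i, (F i).colorNum) → Odd (∑ i, (phiForest F i).colorNum)) ∧
    (Odd (∑ i, (F i).colorNum) → Even (∑ i, (phiForest F i).colorNum)) := by
  have hc := phiForest_colorNum F (not_forall.mp hF)
  rw [Nat.even_iff, Nat.even_iff, Nat.odd_iff, Nat.odd_iff]
  constructor <;> intro h2 <;> omega

/-- **A parity-reversing involution on improper forests of colored binary trees.**
For all positive integers `m` and nonnegative integers `n`, there is an involution `φ`
on the set of improper forests of `m` colored binary trees with `n` internal vertices in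
total which changes the color number by exactly `1` (hence reverses its parity);
consequently, the number of such forests with even color number minus the number of such
forests with odd color number equals the number of proper forests of `m` colored binary
trees with `n` internal vertices in total. -/
theorem parity_reversing_involution_forests (m : ℕ) (hm : 0 < m) (n : ℕ) :
    (∃ φ : {F : Fin m → ColoredBinTree //
          ∑ i, (F i).tree.internals = n ∧ ¬ ∀ i, (F i).Proper} →
        {F : Fin m → ColoredBinTree //
          ∑ i, (F i).tree.internals = n ∧ ¬ ∀ i, (F i).Proper},
      Function.Involutive φ ∧
        ∀ F, (∑ i, ((φ F).1 i).colorNum = (∑ i, (F.1 i).colorNum) + 1 ∨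
          ∑ i, (F.1 i).colorNum = (∑ i, ((φ F).1 i).colorNum) + 1)) ∧
    (Nat.card {F : Fin m → ColoredBinTree //
          ∑ i, (F i).tree.internals = n ∧ Even (∑ i, (F i).colorNum)} : ℤ) -
        (Nat.card {F : Fin m → ColoredBinTree //
          ∑ i, (F i).tree.internals = n ∧ Odd (∑ i, (F i).colorNum)} : ℤ) =
      Nat.card {F : Fin m → ColoredBinTree //
          ∑ i, (F i).tree.internals = n ∧ ∀ i, (F i).Proper} := by
  -- the involution, as a map on improper forests
  have hsum : ∀ F : Fin m → ColoredBinTree,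
      ∑ i, (phiForest F i).tree.internals = ∑ i, (F i).tree.internals :=
    fun F => Finset.sum_congr rfl (fun i _ => by rw [phiForest_tree])
  have himp : ∀ F : Fin m → ColoredBinTree, ¬ (∀ i, (F i).Proper) →
      ¬ ∀ i, (phiForest F i).Proper :=
    fun F h hall => h (fun i => (phiForest_proper_iff F i).mp (hall i))
  refine ⟨⟨fun X => ⟨phiForest X.1, by rw [hsum]; exact X.2.1, himp X.1 X.2.2⟩,
    fun X => Subtype.ext (phiForest_involutive X.1),
    fun X => phiForest_colorNum X.1 (not_forall.mp X.2.2)⟩, ?_⟩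
  -- the counting argument
  haveI hFA : Finite {F : Fin m → ColoredBinTree //
      ∑ i, (F i).tree.internals = n ∧ Even (∑ i, (F i).colorNum)} :=
    finite_forest_subtype _
  haveI hFC : Finite {F : Fin m → ColoredBinTree //
      ∑ i, (F i).tree.internals = n ∧ ∀ i, (F i).Proper} :=
    finite_forest_subtype _
  haveI hFD : Finite {F : Fin m → ColoredBinTree //
      ∑ i, (F i).tree.internals = n ∧
        (Even (∑ i, (F i).colorNum) ∧ ¬ ∀ i, (F i).Proper)} :=
    finite_forest_subtype _
  -- odd forests are improper
  have hOdd : ∀ F : Fin m → ColoredBinTree,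
      (∑ i, (F i).tree.internals = n ∧ Odd (∑ i, (F i).colorNum)) ↔
      (∑ i, (F i).tree.internals = n ∧
        (Odd (∑ i, (F i).colorNum) ∧ ¬ ∀ i, (F i).Proper)) := by
    intro F
    constructor
    · rintro ⟨h1, h2⟩
      exact ⟨h1, h2, fun hall =>
        (Nat.not_even_iff_odd.mpr h2) (even_total_of_proper hall)⟩
    · rintro ⟨h1, h2, -⟩
      exact ⟨h1, h2⟩
  have hB : Nat.card {F : Fin m → ColoredBinTree //
        ∑ i, (F i).tree.internals = n ∧ Odd (∑ i, (F i).colorNum)}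
      = Nat.card {F : Fin m → ColoredBinTree //
        ∑ i, (F i).tree.internals = n ∧
          (Odd (∑ i, (F i).colorNum) ∧ ¬ ∀ i, (F i).Proper)} :=
    Nat.card_congr (Equiv.subtypeEquivRight hOdd)
  -- even forests split into proper forests and even improper forests
  have hA : Nat.card {F : Fin m → ColoredBinTree //
        ∑ i, (F i).tree.internals = n ∧ Even (∑ i, (F i).colorNum)}
      = Nat.card {F : Fin m → ColoredBinTree //
          ∑ i, (F i).tree.internals = n ∧ ∀ i, (F i).Proper}
        + Nat.card {F : Fin m → ColoredBinTree //
          ∑ i, (F i).tree.internals = n ∧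
            (Even (∑ i, (F i).colorNum) ∧ ¬ ∀ i, (F i).Proper)} := by
    classical
    rw [← Nat.card_sum]
    apply Nat.card_congr
    refine ⟨fun X => if h : ∀ i, (X.1 i).Proper then .inl ⟨X.1, X.2.1, h⟩
        else .inr ⟨X.1, X.2.1, X.2.2, h⟩,
      fun Y => match Y with
        | .inl Z => ⟨Z.1, Z.2.1, even_total_of_proper Z.2.2⟩
        | .inr Z => ⟨Z.1, Z.2.1, Z.2.2.1⟩,
      ?_, ?_⟩
    · intro X
      by_cases h : ∀ i, (X.1 i).Proper
      · simp only [dif_pos h]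
      · simp only [dif_neg h]
    · rintro (Z | Z)
      · have h : ∀ i, (Z.1 i).Proper := Z.2.2
        simp only [dif_pos h]
      · have h : ¬ ∀ i, (Z.1 i).Proper := Z.2.2.2
        simp only [dif_neg h]
  -- even improper forests biject with odd improper forests via the involution
  have hDE : Nat.card {F : Fin m → ColoredBinTree //
        ∑ i, (F i).tree.internals = n ∧
          (Even (∑ i, (F i).colorNum) ∧ ¬ ∀ i, (F i).Proper)}
      = Nat.card {F : Fin m → ColoredBinTree //
        ∑ i, (F i).tree.internals = n ∧
          (Odd (∑ i, (F i).colorNum) ∧ ¬ ∀ i, (F i).Proper)} := by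
    apply Nat.card_congr
    have key : ∀ (F : Fin m → ColoredBinTree), ¬ (∀ i, (F i).Proper) →
        (Even (∑ i, (F i).colorNum) → Odd (∑ i, (phiForest F i).colorNum)) ∧
        (Odd (∑ i, (F i).colorNum) → Even (∑ i, (phiForest F i).colorNum)) :=
      fun F hF => key_parity F hF
    refine ⟨fun X => ⟨phiForest X.1, by rw [hsum]; exact X.2.1,
        (key X.1 X.2.2.2).1 X.2.2.1, himp X.1 X.2.2.2⟩,
      fun X => ⟨phiForest X.1, by rw [hsum]; exact X.2.1,
        (key X.1 X.2.2.2).2 X.2.2.1, himp X.1 X.2.2.2⟩, ?_, ?_⟩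
    · intro X
      apply Subtype.ext
      exact phiForest_involutive X.1
    · intro X
      apply Subtype.ext
      exact phiForest_involutive X.1
  rw [hA, hB, hDE]
  push_cast
  ring
end

section
/- For all positive integers m and all nonnegative integers n, there is a bijection between the set of forests of m colored 5-ary trees of total weight n and the set of proper forests of m colored binary trees with n internal vertices in total; in particular these two sets have the same cardinality. -/
/-- A complete 5-ary tree: every internal vertex has exactly 5 (ordered) children. -/
inductive FiveTree : Type
  | leaf : FiveTree
  | node : FiveTree → FiveTree → FiveTree → FiveTree → FiveTree → FiveTree

namespace FiveTree

/-- The number of internal vertices of a complete 5-ary tree. -/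
def internals : FiveTree → ℕ
  | leaf => 0
  | node a b c d e =>
      internals a + internals b + internals c + internals d + internals e + 1

/-- The subtree rooted at the vertex reached from the root by the given path of child
indices; `none` if there is no such vertex. -/
def subtreeAt : FiveTree → List (Fin 5) → Option FiveTree
  | t, [] => some t
  | leaf, _ :: _ => none
  | node a _ _ _ _, ⟨0, _⟩ :: p => subtreeAt a p
  | node _ b _ _ _, ⟨1, _⟩ :: p => subtreeAt b p
  | node _ _ c _ _, ⟨2, _⟩ :: p => subtreeAt c p
  | node _ _ _ d _, ⟨3, _⟩ :: p => subtreeAt d p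
  | node _ _ _ _ e, ⟨_ + 4, _⟩ :: p => subtreeAt e p

/-- The list of (the paths from the root to) all vertices of a complete 5-ary tree. -/
def vertices : FiveTree → List (List (Fin 5))
  | leaf => [[]]
  | node a b c d e =>
      [] :: ((vertices a).map (List.cons 0) ++ (vertices b).map (List.cons 1) ++
        (vertices c).map (List.cons 2) ++ (vertices d).map (List.cons 3) ++
        (vertices e).map (List.cons 4))

end FiveTree

/-- A colored 5-ary tree: a complete 5-ary tree in which every vertex (internal or leaf)
is assigned a nonnegative integer color (non-vertex paths carry the junk color `0`). -/
structure ColoredFiveTree : Type where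
  /-- the underlying complete 5-ary tree -/
  tree : FiveTree
  /-- the color of each vertex (indexed by the path from the root) -/
  color : List (Fin 5) → ℕ
  color_eq_zero : ∀ p, ¬ (FiveTree.subtreeAt tree p).isSome → color p = 0

namespace ColoredFiveTree

/-- The sum of the colors of all vertices of a colored 5-ary tree. -/
def colorSum (T : ColoredFiveTree) : ℕ :=
  ((T.tree.vertices).map T.color).sum

/-- A colored 5-ary tree with `p` internal vertices has weight `n` iff its colors sum to
`n - 4p`; equivalently, its weight is `(sum of colors) + 4 · (number of internal vertices)`. -/
def weight (T : ColoredFiveTree) : ℕ :=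
  T.colorSum + 4 * T.tree.internals

end ColoredFiveTree

namespace ForestsAux

open BinTree

/-! ### Basic lemmas on binary trees -/

lemma subtreeAt_cons (l r : BinTree) (b : Bool) (p : List Bool) :
    subtreeAt (.node l r) (b :: p) = subtreeAt (cond b r l) p := by
  cases b <;> rfl

lemma pathLen_nil (t : BinTree) : pathLen t [] = leftLen t := by
  simp [pathLen, subtreeAt]

lemma pathLen_cons (l r : BinTree) (b : Bool) (p : List Bool) :
    pathLen (.node l r) (b :: p) = pathLen (cond b r l) p := by
  simp [pathLen, subtreeAt_cons]

lemma isInitial_nil (t : BinTree) : IsInitial t [] :=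
  ⟨by simp [subtreeAt], Or.inl rfl⟩

lemma isInitial_node_iff (l r : BinTree) (p : List Bool) :
    IsInitial (.node l r) p ↔ p = [] ∨ (∃ q, p = true :: q ∧ IsInitial r q) ∨
      (∃ q, p = false :: q ∧ q ≠ [] ∧ IsInitial l q) := by
  constructor
  · rintro ⟨hs, hl⟩
    match p with
    | [] => exact Or.inl rfl
    | [b] =>
      rcases hl with h | h
      · simp at h
      · simp at h
        subst h
        exact Or.inr (Or.inl ⟨[], rfl, isInitial_nil r⟩)
    | b :: c :: q =>
      rcases hl with h | h
      · simp at h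
      · rw [List.getLast?_cons_cons] at h
        rw [subtreeAt_cons] at hs
        cases b with
        | true => exact Or.inr (Or.inl ⟨c :: q, rfl, hs, Or.inr h⟩)
        | false => exact Or.inr (Or.inr ⟨c :: q, rfl, by simp, hs, Or.inr h⟩)
  · rintro (rfl | ⟨q, rfl, hq⟩ | ⟨q, rfl, hne, hq⟩)
    · exact isInitial_nil _
    · refine ⟨by rw [subtreeAt_cons]; exact hq.1, Or.inr ?_⟩
      rcases hq.2 with rfl | h
      · simp
      · cases q with
        | nil => simp at h
        | cons c q => rw [List.getLast?_cons_cons]; exact h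
    · refine ⟨by rw [subtreeAt_cons]; exact hq.1, Or.inr ?_⟩
      rcases hq.2 with rfl | h
      · exact absurd rfl hne
      · cases q with
        | nil => exact absurd rfl hne
        | cons c q => rw [List.getLast?_cons_cons]; exact h

/-- All maximal L-paths of `t` have length `≡ 0, 1 (mod 4)`. -/
def Good (t : BinTree) : Prop := ∀ p, IsInitial t p → pathLen t p % 4 ≤ 1

/-- All maximal L-paths of `t` not starting at the root have length `≡ 0, 1 (mod 4)`. -/
def Good' (t : BinTree) : Prop := ∀ p, p ≠ [] → IsInitial t p → pathLen t p % 4 ≤ 1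

lemma good_iff (t : BinTree) : Good t ↔ Good' t ∧ leftLen t % 4 ≤ 1 := by
  constructor
  · exact fun h => ⟨fun p _ hp => h p hp, pathLen_nil t ▸ h [] (isInitial_nil t)⟩
  · rintro ⟨h1, h2⟩ p hp
    rcases eq_or_ne p [] with rfl | hne
    · rw [pathLen_nil]; exact h2
    · exact h1 p hne hp

lemma good'_leaf : Good' .leaf := by
  rintro p hne ⟨hs, _⟩
  cases p with
  | nil => exact absurd rfl hne
  | cons b q => simp [subtreeAt] at hs

lemma good'_node (l r : BinTree) : Good' (.node l r) ↔ Good' l ∧ Good r := by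
  constructor
  · intro h
    constructor
    · intro q hne hq
      have := h (false :: q) (by simp)
        ((isInitial_node_iff l r _).2 (Or.inr (Or.inr ⟨q, rfl, hne, hq⟩)))
      rwa [pathLen_cons] at this
    · intro q hq
      have := h (true :: q) (by simp)
        ((isInitial_node_iff l r _).2 (Or.inr (Or.inl ⟨q, rfl, hq⟩)))
      rwa [pathLen_cons] at this
  · rintro ⟨hl, hr⟩ p hne hp
    rcases (isInitial_node_iff l r p).1 hp with rfl | ⟨q, rfl, hq⟩ | ⟨q, rfl, hqne, hq⟩
    · exact absurd rfl hne
    · rw [pathLen_cons]; exact hr q hq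
    · rw [pathLen_cons]; exact hl q hqne hq

/-! ### The inductive representation of colored 5-ary trees -/

/-- Colored 5-ary trees as an inductive type: each vertex carries a color. -/
inductive CF : Type
  | leaf : ℕ → CF
  | node : ℕ → CF → CF → CF → CF → CF → CF

namespace CF

/-- Sum of all colors. -/
def csum : CF → ℕ
  | leaf c => c
  | node c a b d e f => c + (csum a + csum b + csum d + csum e + csum f)

/-- Number of internal vertices. -/
def itl : CF → ℕ
  | leaf _ => 0
  | node _ a b d e f => itl a + itl b + itl d + itl e + itl f + 1

/-- The weight. -/
def wt (x : CF) : ℕ := csum x + 4 * itl x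

/-- The underlying 5-ary tree. -/
def shape : CF → FiveTree
  | leaf _ => .leaf
  | node _ a b d e f => .node (shape a) (shape b) (shape d) (shape e) (shape f)

/-- The color function, indexed by paths. -/
def colorOf : CF → List (Fin 5) → ℕ
  | leaf c, [] => c
  | leaf _, _ :: _ => 0
  | node c _ _ _ _ _, [] => c
  | node _ a _ _ _ _, ⟨0, _⟩ :: p => colorOf a p
  | node _ _ b _ _ _, ⟨1, _⟩ :: p => colorOf b p
  | node _ _ _ d _ _, ⟨2, _⟩ :: p => colorOf d p
  | node _ _ _ _ e _, ⟨3, _⟩ :: p => colorOf e p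
  | node _ _ _ _ _ f, ⟨_ + 4, _⟩ :: p => colorOf f p

/-- Add `n` to the root color. -/
def addc (n : ℕ) : CF → CF
  | leaf c => leaf (c + n)
  | node c a b d e f => node (c + n) a b d e f

end CF

end ForestsAux
namespace ForestsAux
namespace CF

lemma colorOf_cons0 (c : ℕ) (a b d e f : CF) (p : List (Fin 5)) :
    colorOf (node c a b d e f) ((0 : Fin 5) :: p) = colorOf a p := rfl
lemma colorOf_cons1 (c : ℕ) (a b d e f : CF) (p : List (Fin 5)) :
    colorOf (node c a b d e f) ((1 : Fin 5) :: p) = colorOf b p := rfl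
lemma colorOf_cons2 (c : ℕ) (a b d e f : CF) (p : List (Fin 5)) :
    colorOf (node c a b d e f) ((2 : Fin 5) :: p) = colorOf d p := rfl
lemma colorOf_cons3 (c : ℕ) (a b d e f : CF) (p : List (Fin 5)) :
    colorOf (node c a b d e f) ((3 : Fin 5) :: p) = colorOf e p := rfl
lemma colorOf_cons4 (c : ℕ) (a b d e f : CF) (p : List (Fin 5)) :
    colorOf (node c a b d e f) ((4 : Fin 5) :: p) = colorOf f p := rfl

/-- Rebuild a `CF` from a 5-ary tree and a color function. -/
def build : FiveTree → (List (Fin 5) → ℕ) → CF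
  | .leaf, g => .leaf (g [])
  | .node a b d e f, g =>
      .node (g []) (build a fun p => g ((0 : Fin 5) :: p))
        (build b fun p => g ((1 : Fin 5) :: p))
        (build d fun p => g ((2 : Fin 5) :: p))
        (build e fun p => g ((3 : Fin 5) :: p))
        (build f fun p => g ((4 : Fin 5) :: p))

lemma shape_build (t : FiveTree) : ∀ g, shape (build t g) = t := by
  induction t with
  | leaf => intro g; rfl
  | node a b d e f iha ihb ihd ihe ihf =>
      intro g; simp [build, shape, iha, ihb, ihd, ihe, ihf]

lemma fin5_cases (i : Fin 5) : i = 0 ∨ i = 1 ∨ i = 2 ∨ i = 3 ∨ i = 4 := by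
  fin_cases i <;> simp

lemma fsub0 (a b d e f : FiveTree) (p : List (Fin 5)) :
    FiveTree.subtreeAt (.node a b d e f) ((0 : Fin 5) :: p) = FiveTree.subtreeAt a p := rfl
lemma fsub1 (a b d e f : FiveTree) (p : List (Fin 5)) :
    FiveTree.subtreeAt (.node a b d e f) ((1 : Fin 5) :: p) = FiveTree.subtreeAt b p := rfl
lemma fsub2 (a b d e f : FiveTree) (p : List (Fin 5)) :
    FiveTree.subtreeAt (.node a b d e f) ((2 : Fin 5) :: p) = FiveTree.subtreeAt d p := rfl
lemma fsub3 (a b d e f : FiveTree) (p : List (Fin 5)) :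
    FiveTree.subtreeAt (.node a b d e f) ((3 : Fin 5) :: p) = FiveTree.subtreeAt e p := rfl
lemma fsub4 (a b d e f : FiveTree) (p : List (Fin 5)) :
    FiveTree.subtreeAt (.node a b d e f) ((4 : Fin 5) :: p) = FiveTree.subtreeAt f p := rfl

lemma colorOf_build_of_isSome (t : FiveTree) : ∀ g p, (FiveTree.subtreeAt t p).isSome →
    colorOf (build t g) p = g p := by
  induction t with
  | leaf =>
      intro g p hp
      cases p with
      | nil => rfl
      | cons i q => simp [FiveTree.subtreeAt] at hp
  | node a b d e f iha ihb ihd ihe ihf =>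
      intro g p hp
      cases p with
      | nil => rfl
      | cons i q =>
          simp only [build]
          rcases fin5_cases i with rfl | rfl | rfl | rfl | rfl
          · rw [colorOf_cons0]; exact iha _ q (by rwa [fsub0] at hp)
          · rw [colorOf_cons1]; exact ihb _ q (by rwa [fsub1] at hp)
          · rw [colorOf_cons2]; exact ihd _ q (by rwa [fsub2] at hp)
          · rw [colorOf_cons3]; exact ihe _ q (by rwa [fsub3] at hp)
          · rw [colorOf_cons4]; exact ihf _ q (by rwa [fsub4] at hp)

lemma colorOf_build_of_not_isSome (t : FiveTree) : ∀ g p, ¬ (FiveTree.subtreeAt t p).isSome →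
    colorOf (build t g) p = 0 := by
  induction t with
  | leaf =>
      intro g p hp
      cases p with
      | nil => simp [FiveTree.subtreeAt] at hp
      | cons i q => rfl
  | node a b d e f iha ihb ihd ihe ihf =>
      intro g p hp
      cases p with
      | nil => simp [FiveTree.subtreeAt] at hp
      | cons i q =>
          simp only [build]
          rcases fin5_cases i with rfl | rfl | rfl | rfl | rfl
          · rw [colorOf_cons0]; exact iha _ q (by rwa [fsub0] at hp)
          · rw [colorOf_cons1]; exact ihb _ q (by rwa [fsub1] at hp)
          · rw [colorOf_cons2]; exact ihd _ q (by rwa [fsub2] at hp)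
          · rw [colorOf_cons3]; exact ihe _ q (by rwa [fsub3] at hp)
          · rw [colorOf_cons4]; exact ihf _ q (by rwa [fsub4] at hp)

lemma build_shape_colorOf : ∀ x : CF, build (shape x) (colorOf x) = x := by
  intro x
  induction x with
  | leaf c => rfl
  | node c a b d e f iha ihb ihd ihe ihf =>
      show CF.node _ _ _ _ _ _ = _
      rw [show (fun p => colorOf (node c a b d e f) ((0:Fin 5) :: p)) = colorOf a from rfl]
      rw [show (fun p => colorOf (node c a b d e f) ((1:Fin 5) :: p)) = colorOf b from rfl]
      rw [show (fun p => colorOf (node c a b d e f) ((2:Fin 5) :: p)) = colorOf d from rfl]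
      rw [show (fun p => colorOf (node c a b d e f) ((3:Fin 5) :: p)) = colorOf e from rfl]
      rw [show (fun p => colorOf (node c a b d e f) ((4:Fin 5) :: p)) = colorOf f from rfl]
      rw [iha, ihb, ihd, ihe, ihf]
      rfl

lemma internals_shape (x : CF) : (shape x).internals = itl x := by
  induction x with
  | leaf c => rfl
  | node c a b d e f iha ihb ihd ihe ihf =>
      simp [shape, FiveTree.internals, itl, iha, ihb, ihd, ihe, ihf]

lemma sum_vertices_colorOf (x : CF) :
    (((shape x).vertices).map (colorOf x)).sum = csum x := by
  induction x with
  | leaf c => simp [shape, FiveTree.vertices, colorOf, csum]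
  | node c a b d e f iha ihb ihd ihe ihf =>
      show ((FiveTree.vertices (.node _ _ _ _ _)).map (colorOf (node c a b d e f))).sum = _
      rw [FiveTree.vertices]
      simp only [List.map_cons, List.map_append, List.map_map, List.sum_cons, List.sum_append]
      rw [show colorOf (node c a b d e f) ∘ List.cons (0:Fin 5) = colorOf a from rfl]
      rw [show colorOf (node c a b d e f) ∘ List.cons (1:Fin 5) = colorOf b from rfl]
      rw [show colorOf (node c a b d e f) ∘ List.cons (2:Fin 5) = colorOf d from rfl]
      rw [show colorOf (node c a b d e f) ∘ List.cons (3:Fin 5) = colorOf e from rfl]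
      rw [show colorOf (node c a b d e f) ∘ List.cons (4:Fin 5) = colorOf f from rfl]
      rw [iha, ihb, ihd, ihe, ihf]
      show colorOf (node c a b d e f) [] + _ = _
      rw [show colorOf (node c a b d e f) [] = c from rfl]
      simp only [csum, List.sum_nil, List.sum_cons]

end CF

lemma ColoredFiveTree.ext' : ∀ {T1 T2 : ColoredFiveTree},
    T1.tree = T2.tree → T1.color = T2.color → T1 = T2 := by
  rintro ⟨t1, c1, h1⟩ ⟨t2, c2, h2⟩ rfl rfl; rfl

lemma ColoredBinTree.ext' : ∀ {B1 B2 : ColoredBinTree},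
    B1.tree = B2.tree → B1.color = B2.color → B1 = B2 := by
  rintro ⟨t1, c1, h1, h1'⟩ ⟨t2, c2, h2, h2'⟩ rfl rfl; rfl

/-- The equivalence between `ColoredFiveTree` and `CF`. -/
def cftEquiv : ColoredFiveTree ≃ CF where
  toFun T := CF.build T.tree T.color
  invFun x := ⟨CF.shape x, CF.colorOf x, fun p hp => by
    have := CF.colorOf_build_of_not_isSome (CF.shape x) (CF.colorOf x) p hp
    rwa [CF.build_shape_colorOf] at this⟩
  left_inv T := by
    obtain ⟨t, g, hg⟩ := T
    refine ColoredFiveTree.ext' (CF.shape_build t g) (funext fun p => ?_)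
    show CF.colorOf (CF.build t g) p = g p
    by_cases hp : (FiveTree.subtreeAt t p).isSome
    · exact CF.colorOf_build_of_isSome t g p hp
    · rw [CF.colorOf_build_of_not_isSome t g p hp, hg p hp]
  right_inv x := CF.build_shape_colorOf x

lemma weight_cftEquiv_symm (x : CF) : (cftEquiv.symm x).weight = CF.wt x := by
  show ((FiveTree.vertices (CF.shape x)).map (CF.colorOf x)).sum
      + 4 * (CF.shape x).internals = CF.wt x
  rw [CF.sum_vertices_colorOf, CF.internals_shape]
  rfl

end ForestsAux
namespace ForestsAux

open BinTree

/-! ### The recursive bijection between `CF` and good binary trees -/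

/-- Prepend a chain of `c` internal vertices (with leaf left children). -/
def chain : ℕ → BinTree → BinTree
  | 0, t => t
  | c + 1, t => .node .leaf (chain c t)

@[simp] lemma internals_chain (c : ℕ) (t : BinTree) :
    (chain c t).internals = c + t.internals := by
  induction c with
  | zero => simp [chain]
  | succ c ih => simp [chain, internals, ih]; omega

lemma leftLen_chain_succ (c : ℕ) (t : BinTree) : (chain (c + 1) t).leftLen = 1 := rfl

/-- The map from colored 5-ary trees to binary trees. -/
def toBin : CF → BinTree
  | .leaf c => chain c .leaf
  | .node c t1 t2 t3 t4 t5 =>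
      chain c (.node (.node (.node (.node (toBin t5) (toBin t4)) (toBin t3)) (toBin t2))
        (toBin t1))

lemma internals_toBin (x : CF) : (toBin x).internals = CF.wt x := by
  induction x with
  | leaf c => simp [toBin, internals, CF.wt, CF.csum, CF.itl]
  | node c t1 t2 t3 t4 t5 ih1 ih2 ih3 ih4 ih5 =>
      simp [toBin, internals, ih1, ih2, ih3, ih4, ih5, CF.wt, CF.csum, CF.itl]
      ring

lemma good'_chain (c : ℕ) (t : BinTree) (h1 : Good' t) (h2 : t.leftLen % 4 ≤ 1) :
    Good' (chain c t) := by
  induction c with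
  | zero => exact h1
  | succ c ih =>
      rw [chain, good'_node]
      refine ⟨good'_leaf, (good_iff _).2 ⟨ih, ?_⟩⟩
      cases c with
      | zero => exact h2
      | succ c => rw [leftLen_chain_succ]

lemma leftLen_toBin_mod (x : CF) : (toBin x).leftLen % 4 ≤ 1 := by
  induction x with
  | leaf c =>
      cases c with
      | zero => simp [toBin, chain, leftLen]
      | succ c => rw [toBin, leftLen_chain_succ]
  | node c t1 t2 t3 t4 t5 ih1 ih2 ih3 ih4 ih5 =>
      cases c with
      | zero =>
          show (BinTree.node _ _).leftLen % 4 ≤ 1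
          simp only [leftLen]
          omega
      | succ c => rw [toBin, leftLen_chain_succ]

lemma good'_toBin (x : CF) : Good' (toBin x) := by
  induction x with
  | leaf c =>
      rw [toBin]
      exact good'_chain c _ good'_leaf (by simp [leftLen])
  | node c t1 t2 t3 t4 t5 ih1 ih2 ih3 ih4 ih5 =>
      rw [toBin]
      refine good'_chain c _ ?_ ?_
      · rw [good'_node]
        refine ⟨?_, (good_iff _).2 ⟨ih1, leftLen_toBin_mod t1⟩⟩
        rw [good'_node]
        refine ⟨?_, (good_iff _).2 ⟨ih2, leftLen_toBin_mod t2⟩⟩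
        rw [good'_node]
        refine ⟨?_, (good_iff _).2 ⟨ih3, leftLen_toBin_mod t3⟩⟩
        rw [good'_node]
        exact ⟨ih5, (good_iff _).2 ⟨ih4, leftLen_toBin_mod t4⟩⟩
      · show ((toBin t5).leftLen + 1 + 1 + 1 + 1) % 4 ≤ 1
        have := leftLen_toBin_mod t5
        omega

lemma good_toBin (x : CF) : Good (toBin x) :=
  (good_iff _).2 ⟨good'_toBin x, leftLen_toBin_mod x⟩

/-- The inverse map: from binary trees to colored 5-ary trees (junk on non-good trees). -/
def fromBin : BinTree → CF
  | .leaf => .leaf 0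
  | .node .leaf r => CF.addc 1 (fromBin r)
  | .node (.node (.node (.node e d) c) b) a =>
      .node 0 (fromBin a) (fromBin b) (fromBin c) (fromBin d) (fromBin e)
  | .node (.node .leaf _) _ => .leaf 0
  | .node (.node (.node .leaf _) _) _ => .leaf 0

lemma fromBin_chain (c : ℕ) (t : BinTree) :
    fromBin (chain c t) = CF.addc c (fromBin t) := by
  induction c with
  | zero => cases h : fromBin t <;> simp [chain, CF.addc, h]
  | succ c ih =>
      rw [chain, show fromBin (.node .leaf (chain c t)) = CF.addc 1 (fromBin (chain c t))
        from rfl, ih]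
      cases fromBin t <;> simp [CF.addc] <;> omega

lemma fromBin_toBin (x : CF) : fromBin (toBin x) = x := by
  induction x with
  | leaf c =>
      rw [toBin, fromBin_chain]
      simp [fromBin, CF.addc]
  | node c t1 t2 t3 t4 t5 ih1 ih2 ih3 ih4 ih5 =>
      rw [toBin, fromBin_chain]
      rw [show fromBin (.node (.node (.node (.node (toBin t5) (toBin t4)) (toBin t3))
        (toBin t2)) (toBin t1)) = .node 0 (fromBin (toBin t1)) (fromBin (toBin t2))
        (fromBin (toBin t3)) (fromBin (toBin t4)) (fromBin (toBin t5)) from ?_]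
      · rw [ih1, ih2, ih3, ih4, ih5]; simp [CF.addc]
      · cases h5 : toBin t5 <;> rfl

lemma toBin_addc_one (x : CF) : toBin (CF.addc 1 x) = .node .leaf (toBin x) := by
  cases x with
  | leaf c =>
      show chain (c + 1) BinTree.leaf = BinTree.node BinTree.leaf (toBin (CF.leaf c))
      rw [chain]; rfl
  | node c t1 t2 t3 t4 t5 =>
      show chain (c + 1) (BinTree.node (.node (.node (.node (toBin t5) (toBin t4))
          (toBin t3)) (toBin t2)) (toBin t1)) =
        BinTree.node BinTree.leaf (toBin (CF.node c t1 t2 t3 t4 t5))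
      rw [chain]; rfl

lemma toBin_fromBin : ∀ n t, t.internals ≤ n → Good t → toBin (fromBin t) = t := by
  intro n
  induction n with
  | zero =>
      intro t ht _
      cases t with
      | leaf => rfl
      | node l r => simp [internals] at ht
  | succ n ih =>
      intro t ht hg
      match t with
      | .leaf => rfl
      | .node .leaf r =>
          rw [fromBin, toBin_addc_one]
          have hgr : Good r := by
            rw [good_iff] at hg ⊢
            have := (good'_node _ _).1 hg.1
            rw [good_iff] at this
            exact this.2
          rw [ih r (by simp [internals] at ht; omega) hgr]
      | .node (.node l2 r2) a =>
          have hlen : ((BinTree.node (.node l2 r2) a).leftLen) % 4 ≤ 1 :=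
            ((good_iff _).1 hg).2
          simp only [leftLen] at hlen
          match l2, hlen with
          | .leaf, hlen => simp [leftLen] at hlen
          | .node .leaf _, hlen => simp [leftLen] at hlen
          | .node (.node e d) c3, hlen =>
              rw [fromBin, toBin]
              have h1 : Good' (BinTree.node (.node (.node (.node e d) c3) r2) a) :=
                ((good_iff _).1 hg).1
              rw [good'_node] at h1
              obtain ⟨h2, hga⟩ := h1
              rw [good'_node] at h2
              obtain ⟨h3, hgb⟩ := h2
              rw [good'_node] at h3
              obtain ⟨h4, hgc⟩ := h3
              rw [good'_node] at h4
              obtain ⟨h5, hgd⟩ := h4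
              have hge : Good e := by
                rw [good_iff]
                refine ⟨h5, ?_⟩
                simp only [leftLen] at hlen
                omega
              simp only [internals] at ht
              rw [chain, ih a (by omega) hga, ih r2 (by omega) hgb,
                ih c3 (by omega) hgc, ih d (by omega) hgd, ih e (by omega) hge]

/-- The equivalence between `CF` and good binary trees. -/
def cfGoodEquiv : CF ≃ {t : BinTree // Good t} where
  toFun x := ⟨toBin x, good_toBin x⟩
  invFun t := fromBin t.1
  left_inv x := fromBin_toBin x
  right_inv t := Subtype.ext (toBin_fromBin t.1.internals t.1 le_rfl t.2)

end ForestsAux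
namespace ForestsAux

open BinTree

/-! ### Proper colored binary trees vs good trees -/

open Classical in
/-- The equivalence between proper colored binary trees and good binary trees. -/
noncomputable def properGoodEquiv : {B : ColoredBinTree // B.Proper} ≃ {t : BinTree // Good t} where
  toFun B := ⟨B.1.tree, fun p hp => by
    obtain ⟨k, _, hk⟩ := B.2 p hp
    omega⟩
  invFun t :=
    ⟨⟨t.1, fun p => if IsInitial t.1 p then 2 * (pathLen t.1 p / 4) else 0,
      fun p hp => by
        show (if IsInitial t.1 p then 2 * (pathLen t.1 p / 4) else 0) ≤ _
        rw [if_pos hp]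
        omega,
      fun p hp => if_neg hp⟩,
      fun p hp => ⟨pathLen t.1 p / 4, if_pos hp, by
        have := t.2 p hp
        show pathLen t.1 p = 4 * (pathLen t.1 p / 4) ∨
          pathLen t.1 p = 4 * (pathLen t.1 p / 4) + 1
        omega⟩⟩
  left_inv B := by
    refine Subtype.ext (ColoredBinTree.ext' rfl (funext fun p => ?_))
    show (if IsInitial B.1.tree p then 2 * (pathLen B.1.tree p / 4) else 0) = B.1.color p
    by_cases hp : IsInitial B.1.tree p
    · rw [if_pos hp]
      obtain ⟨k, hc, hk⟩ := B.2 p hp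
      rw [hc]
      congr 1
      omega
    · rw [if_neg hp, (B.1.color_eq_zero p hp).symm]
  right_inv t := Subtype.ext rfl

/-- The master equivalence, preserving weight/internals. -/
noncomputable def masterEquiv : ColoredFiveTree ≃ {B : ColoredBinTree // B.Proper} :=
  (cftEquiv.trans cfGoodEquiv).trans properGoodEquiv.symm

lemma internals_masterEquiv (T : ColoredFiveTree) :
    (masterEquiv T).1.tree.internals = T.weight := by
  show (toBin (cftEquiv T)).internals = T.weight
  rw [internals_toBin]
  have := weight_cftEquiv_symm (cftEquiv T)
  rw [cftEquiv.symm_apply_apply] at this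
  exact this.symm

/-- The forest-level equivalence. -/
noncomputable def forestEquiv (m : ℕ) : (Fin m → ColoredFiveTree) ≃
    {F : Fin m → ColoredBinTree // ∀ i, (F i).Proper} :=
  (Equiv.piCongrRight fun _ => ForestsAux.masterEquiv).trans
    (Equiv.subtypePiEquivPi (p := fun _ B => ColoredBinTree.Proper B)).symm

lemma forestEquiv_apply (m : ℕ) (F : Fin m → ColoredFiveTree) (i : Fin m) :
    (forestEquiv m F).1 i = ForestsAux.masterEquiv (F i) := rfl

end ForestsAux

/-- **The bijection between forests of colored 5-ary trees and proper forests of colored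
binary trees.** For all positive integers `m` and nonnegative integers `n`, there is a
bijection between the set of forests of `m` colored 5-ary trees of total weight `n` and
the set of proper forests of `m` colored binary trees with `n` internal vertices in
total; in particular these two sets have the same cardinality. -/
theorem forests_five_ary_equiv_proper_forests (m : ℕ) (hm : 0 < m) (n : ℕ) :
    Nonempty ({F : Fin m → ColoredFiveTree // ∑ i, (F i).weight = n} ≃
        {F : Fin m → ColoredBinTree //
          ∑ i, (F i).tree.internals = n ∧ ∀ i, (F i).Proper}) ∧
      Nat.card {F : Fin m → ColoredFiveTree // ∑ i, (F i).weight = n} =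
        Nat.card {F : Fin m → ColoredBinTree //
          ∑ i, (F i).tree.internals = n ∧ ∀ i, (F i).Proper} := by
  set e1 := ForestsAux.forestEquiv m with he1def
  have he1 : ∀ (F : Fin m → ColoredFiveTree) i,
      ((e1 F).1 i).tree.internals = (F i).weight := fun F i => by
    rw [he1def, ForestsAux.forestEquiv_apply]
    exact ForestsAux.internals_masterEquiv (F i)
  have e2 : {F : Fin m → ColoredFiveTree // ∑ i, (F i).weight = n} ≃
      {G : {F : Fin m → ColoredBinTree // ∀ i, (F i).Proper} //
        ∑ i, (G.1 i).tree.internals = n} :=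
    Equiv.subtypeEquiv e1 fun F => by
      rw [show ∑ i, ((e1 F).1 i).tree.internals = ∑ i, (F i).weight from
        Finset.sum_congr rfl fun i _ => he1 F i]
  have e3 := e2.trans ((Equiv.subtypeSubtypeEquivSubtypeInter
      (fun F : Fin m → ColoredBinTree => ∀ i, (F i).Proper)
      (fun F : Fin m → ColoredBinTree => ∑ i, (F i).tree.internals = n)).trans
      (Equiv.subtypeEquivRight fun F => and_comm))
  exact ⟨⟨e3⟩, Nat.card_congr e3⟩
end

section
/- For all positive integers m and all nonnegative integers n, the number of forests of m colored 5-ary trees of total weight n equals \sum_{p=0}^{\lfloor n/4 \rfloor} (m/(5p+m)) \binom{5p+m}{p} \binom{n+p+m-1}{n-4p}. -/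
namespace FiveTree

lemma subtreeAt_node (a b c d e : FiveTree) (i : Fin 5) (q : List (Fin 5)) :
    subtreeAt (node a b c d e) (i :: q) = subtreeAt (![a, b, c, d, e] i) q := by
  fin_cases i <;> rfl

end FiveTree

namespace ColoredFiveTree

@[ext] lemma ext' {T U : ColoredFiveTree} (h1 : T.tree = U.tree) (h2 : T.color = U.color) :
    T = U := by
  cases T; cases U; simp_all

/-- leaf with color `c` -/
def mkLeaf (c : ℕ) : ColoredFiveTree where
  tree := .leaf
  color := fun p => match p with | [] => c | _ :: _ => 0
  color_eq_zero := by intro p hp; cases p with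
    | nil => simp [FiveTree.subtreeAt] at hp
    | cons x q => rfl

/-- node with root color `c` and children `f` -/
def mkNode (c : ℕ) (f : Fin 5 → ColoredFiveTree) : ColoredFiveTree where
  tree := .node (f 0).tree (f 1).tree (f 2).tree (f 3).tree (f 4).tree
  color := fun p => match p with | [] => c | i :: q => (f i).color q
  color_eq_zero := by
    intro p hp
    cases p with
    | nil => simp [FiveTree.subtreeAt] at hp
    | cons i q =>
      show (f i).color q = 0
      apply (f i).color_eq_zero
      rw [FiveTree.subtreeAt_node] at hp
      revert hp
      have : ![(f 0).tree, (f 1).tree, (f 2).tree, (f 3).tree, (f 4).tree] i = (f i).tree := by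
        fin_cases i <;> rfl
      rw [this]
      exact id

lemma weight_mkLeaf (c : ℕ) : (mkLeaf c).weight = c := by
  simp [weight, colorSum, mkLeaf, FiveTree.vertices, FiveTree.internals]

lemma weight_mkNode (c : ℕ) (f : Fin 5 → ColoredFiveTree) :
    (mkNode c f).weight = c + 4 + ∑ i, (f i).weight := by
  have hcs : (mkNode c f).colorSum = c + ∑ i, (f i).colorSum := by
    simp only [colorSum, mkNode, FiveTree.vertices, List.map_cons, List.map_append,
      List.map_map, List.sum_cons, List.sum_append, Fin.sum_univ_five]
    congr 1
  have hint : (mkNode c f).tree.internals = (∑ i, (f i).tree.internals) + 1 := by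
    simp [mkNode, FiveTree.internals, Fin.sum_univ_five]
  simp only [weight, hcs, hint, Nat.mul_add, Nat.mul_one, Finset.mul_sum,
    Finset.sum_add_distrib]
  ring
end ColoredFiveTree

namespace ColoredFiveTree

lemma decompose (T : ColoredFiveTree) :
    T = mkLeaf (T.color []) ∨ ∃ f : Fin 5 → ColoredFiveTree, T = mkNode (T.color []) f := by
  obtain ⟨t, col, hcol⟩ := T
  cases t with
  | leaf =>
    left
    ext p
    · rfl
    · cases p with
      | nil => rfl
      | cons x q =>
        show col (x :: q) = 0
        exact hcol _ (by simp [FiveTree.subtreeAt])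
  | node a b c d e =>
    right
    refine ⟨fun i => ⟨![a, b, c, d, e] i, fun q => col (i :: q), fun q hq => ?_⟩, ?_⟩
    · exact hcol (i :: q) (by rwa [FiveTree.subtreeAt_node])
    · ext p
      · show FiveTree.node a b c d e = FiveTree.node _ _ _ _ _
        rfl
      · cases p with
        | nil => rfl
        | cons i q => rfl

lemma mkLeaf_ne_mkNode (c c' : ℕ) (f : Fin 5 → ColoredFiveTree) : mkLeaf c ≠ mkNode c' f := by
  intro h
  exact absurd (congrArg tree h) (by simp [mkLeaf, mkNode])

lemma mkLeaf_inj {c c' : ℕ} (h : mkLeaf c = mkLeaf c') : c = c' :=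
  congrFun (congrArg color h) []

lemma mkNode_inj {c c' : ℕ} {f f' : Fin 5 → ColoredFiveTree}
    (h : mkNode c f = mkNode c' f') : c = c' ∧ f = f' := by
  have hcol := congrArg color h
  have htree := congrArg tree h
  refine ⟨congrFun hcol [], ?_⟩
  funext i
  ext p
  · simp only [mkNode, FiveTree.node.injEq] at htree
    fin_cases i <;> tauto
  · exact congrFun hcol (i :: p)

end ColoredFiveTree

def Aq (m p : ℕ) : ℚ :=
  if m = 0 then (if p = 0 then 1 else 0) else (m : ℚ) / (5 * p + m) * ((5 * p + m).choose p)

def Rq (m n : ℕ) : ℚ :=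
  ∑ p ∈ Finset.range (n / 4 + 1), Aq m p * ((n + p + m - 1).choose (n - 4 * p))

lemma Aq_zero (m : ℕ) : Aq m 0 = 1 := by
  rcases Nat.eq_zero_or_pos m with h | h
  · simp [Aq, h]
  · have : (m : ℚ) ≠ 0 := by positivity
    simp [Aq, show ¬ m = 0 by omega, div_mul_eq_mul_div, this]

lemma Aq_formula (m p : ℕ) (hp : 1 ≤ p) :
    Aq m p = (m : ℚ) / (5 * p + m) * ((5 * p + m).choose p) := by
  rcases Nat.eq_zero_or_pos m with h | h
  · subst h; simp [Aq, show ¬ p = 0 by omega]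
  · rw [Aq, if_neg (by omega)]

lemma Aq_succ (m p : ℕ) (hp : 1 ≤ p) : Aq (m + 1) p = Aq m p + Aq (m + 5) (p - 1) := by
  obtain ⟨q, rfl⟩ : ∃ q, p = q + 1 := ⟨p - 1, by omega⟩
  rw [Aq_formula m (q + 1) hp, Aq_formula (m + 1) (q + 1) hp]
  have h5 : Aq (m + 5) q = ((m : ℚ) + 5) / (5 * (q + 1) + m) * ((5 * (q + 1) + m).choose q) := by
    rcases Nat.eq_zero_or_pos q with rfl | hq
    · rw [Aq_zero]
      have h1 : ((5 * (0 + 1) + m).choose 0 : ℚ) = 1 := by norm_num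
      rw [h1, mul_one, eq_comm, div_eq_one_iff_eq] <;> push_cast <;> ring_nf
      positivity
    · rw [Aq_formula (m + 5) q hq]
      have : 5 * q + (m + 5) = 5 * (q + 1) + m := by ring
      rw [this]
      push_cast
      ring_nf
  rw [Nat.add_sub_cancel, h5]
  -- now a pure formula identity
  set N := 5 * (q + 1) + m with hN
  have pas : (N + 1).choose (q + 1) = N.choose q + N.choose (q + 1) := Nat.choose_succ_succ' N q
  have h2 : N.choose (q + 1) * (q + 1) = N.choose q * (4 * q + m + 5) := by
    have := Nat.choose_succ_right_eq N q
    rwa [show N - q = 4 * q + m + 5 by omega] at this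
  have hNq : 5 * (q + 1) + (m + 1) = N + 1 := by omega
  rw [hNq, pas]
  have h2q : (N.choose (q + 1) : ℚ) * (q + 1) = (N.choose q : ℚ) * (4 * q + m + 5) := by
    exact_mod_cast congrArg (Nat.cast : ℕ → ℚ) h2
  have hN0 : ((N : ℚ)) ≠ 0 := by positivity
  have hN1 : ((N : ℚ) + 1) ≠ 0 := by positivity
  have hq1 : ((q : ℚ) + 1) ≠ 0 := by positivity
  have hNcast : (N : ℚ) = 5 * (q + 1) + m := by rw [hN]; push_cast; ring
  push_cast
  rw [← hNcast]
  refine mul_left_cancel₀ hq1 ?_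
  field_simp
  linear_combination 5 * h2q + ((m : ℚ) + 1) * ((N.choose q : ℚ) + (N.choose (q + 1) : ℚ)) * hNcast

lemma Rq_cum (m n : ℕ) : ∑ k ∈ Finset.range (n + 1), Rq m k
    = ∑ p ∈ Finset.range (n / 4 + 1), Aq m p * ((n + p + m).choose (n - 4 * p)) := by
  induction n with
  | zero => simp [Rq]
  | succ n ih =>
    rw [Finset.sum_range_succ, ih, Rq]
    have key : ∀ p ∈ Finset.range (n / 4 + 1),
        Aq m p * ((n + p + m).choose (n - 4 * p)) +
          Aq m p * ((n + 1 + p + m - 1).choose (n + 1 - 4 * p)) =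
        Aq m p * ((n + 1 + p + m).choose (n + 1 - 4 * p)) := by
      intro p hp
      simp only [Finset.mem_range] at hp
      have h4p : 4 * p ≤ n := by omega
      have hC : (n + p + m).choose (n - 4 * p) + (n + 1 + p + m - 1).choose (n + 1 - 4 * p)
          = (n + 1 + p + m).choose (n + 1 - 4 * p) := by
        rw [show n + 1 + p + m - 1 = n + p + m by omega,
          show n + 1 - 4 * p = (n - 4 * p) + 1 by omega,
          show n + 1 + p + m = (n + p + m) + 1 by omega,
          Nat.choose_succ_succ']
      rw [← mul_add, ← Nat.cast_add, hC]
    rcases Nat.lt_or_ge ((n + 1) / 4) (n / 4 + 1) with h | h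
    · have hr : (n + 1) / 4 = n / 4 := by omega
      rw [hr, ← Finset.sum_add_distrib]
      exact Finset.sum_congr rfl key
    · have hr : (n + 1) / 4 = n / 4 + 1 := by omega
      have hmod : n + 1 = 4 * (n / 4 + 1) := by omega
      rw [hr,
        Finset.sum_range_succ
          (fun p => Aq m p * ((n + 1 + p + m - 1).choose (n + 1 - 4 * p) : ℚ)) (n / 4 + 1),
        Finset.sum_range_succ
          (fun p => Aq m p * ((n + 1 + p + m).choose (n + 1 - 4 * p) : ℚ)) (n / 4 + 1),
        ← add_assoc, ← Finset.sum_add_distrib, Finset.sum_congr rfl key]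
      congr 1
      rw [show n + 1 - 4 * (n / 4 + 1) = 0 by omega]
      simp

lemma Rq_master (m n : ℕ) :
    Rq (m + 1) n = ∑ k ∈ Finset.range (n + 1), Rq m k + ∑ k ∈ Finset.range (n - 3), Rq (m + 5) k := by
  rcases Nat.lt_or_ge n 4 with h | h
  · rw [show n - 3 = 0 by omega]
    rw [Finset.range_zero, Finset.sum_empty, add_zero, Rq_cum, Rq, show n / 4 = 0 by omega]
    simp only [zero_add, Finset.range_one, Finset.sum_singleton]
    rw [Aq_zero, Aq_zero, show n + 0 + (m + 1) - 1 = n + 0 + m by omega]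
  · rw [show n - 3 = (n - 4) + 1 by omega, Rq_cum, Rq_cum, Rq]
    have hq : (n - 4) / 4 + 1 = n / 4 := by omega
    rw [hq]
    have hsplit : ∀ f : ℕ → ℚ, ∑ p ∈ Finset.range (n / 4 + 1), f p
        = f 0 + ∑ i ∈ Finset.range (n / 4), f (i + 1) := by
      intro f; rw [Finset.sum_range_succ' f]; ring
    rw [hsplit (fun p => Aq (m + 1) p * ((n + p + (m + 1) - 1).choose (n - 4 * p) : ℚ)),
      hsplit (fun p => Aq m p * ((n + p + m).choose (n - 4 * p) : ℚ))]
    conv_rhs => rw [add_assoc]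
    congr 1
    · rw [Aq_zero, Aq_zero, show n + 0 + (m + 1) - 1 = n + 0 + m by omega]
    · rw [← Finset.sum_add_distrib]
      refine Finset.sum_congr rfl fun i hi => ?_
      simp only [Finset.mem_range] at hi
      have h4i : 4 * (i + 1) ≤ n := by omega
      rw [Aq_succ m (i + 1) (by omega), Nat.add_sub_cancel, add_mul,
        show n + (i + 1) + (m + 1) - 1 = n + (i + 1) + m by omega,
        show n - 4 + i + (m + 5) = n + (i + 1) + m by omega,
        show n - 4 - 4 * i = n - 4 * (i + 1) by omega]

abbrev Forest (m n : ℕ) := {F : Fin m → ColoredFiveTree // ∑ i, (F i).weight = n}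

def Dec (m n : ℕ) : Type :=
  (Σ c : Fin (n + 1), Forest m (n - c)) ⊕ (Σ c : Fin (n - 3), Forest (m + 5) (n - 4 - c))

open ColoredFiveTree in
def Phi (m n : ℕ) : Dec m n → Forest (m + 1) n
  | .inl ⟨c, F⟩ => ⟨Fin.cons (mkLeaf c) F.val, by
      have hc : (c : ℕ) < n + 1 := c.isLt
      have hF := F.prop
      rw [Fin.sum_univ_succ]
      simp only [Fin.cons_zero, Fin.cons_succ, weight_mkLeaf]
      omega⟩
  | .inr ⟨c, F⟩ => ⟨Fin.cons (mkNode c (fun i => F.val (Fin.natAdd m i)))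
        (fun j => F.val (Fin.castAdd 5 j)), by
      have hc : (c : ℕ) < n - 3 := c.isLt
      have hF := F.prop
      rw [Fin.sum_univ_add (fun k => (F.val k).weight)] at hF
      rw [Fin.sum_univ_succ]
      simp only [Fin.cons_zero, Fin.cons_succ, weight_mkNode]
      omega⟩

open ColoredFiveTree in
lemma Phi_bijective (m n : ℕ) : Function.Bijective (Phi m n) := by
  constructor
  · rintro (⟨c, F⟩ | ⟨c, F⟩) (⟨c', F'⟩ | ⟨c', F'⟩) h <;>
      have hval := congrArg Subtype.val h <;>
      have h0 := congrFun hval 0 <;>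
      simp only [Phi, Fin.cons_zero] at h0 <;>
      have htail := congrArg Fin.tail hval <;>
      simp only [Phi, Fin.tail_cons] at htail
    · obtain rfl : c = c' := Fin.ext (mkLeaf_inj h0)
      obtain rfl : F = F' := Subtype.ext htail
      rfl
    · exact absurd h0 (mkLeaf_ne_mkNode _ _ _)
    · exact absurd h0.symm (mkLeaf_ne_mkNode _ _ _)
    · obtain ⟨hcc, hff⟩ := mkNode_inj h0
      obtain rfl : c = c' := Fin.ext hcc
      obtain rfl : F = F' := by
        refine Subtype.ext (funext fun k => ?_)
        refine Fin.addCases (fun j => ?_) (fun i => ?_) k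
        · exact congrFun htail j
        · exact congrFun hff i
      rfl
  · rintro ⟨G, hG⟩
    have hsum : (G 0).weight + ∑ j, (Fin.tail G j).weight = n := by
      rw [← hG, Fin.sum_univ_succ]; rfl
    rcases (G 0).decompose with hT | ⟨f, hT⟩
    · have hw : (G 0).weight = (G 0).color [] := by rw [hT, weight_mkLeaf]; rfl
      refine ⟨.inl ⟨⟨(G 0).color [], by omega⟩, ⟨Fin.tail G, by simp only; omega⟩⟩, ?_⟩
      refine Subtype.ext ?_
      show Fin.cons (mkLeaf ((G 0).color [])) (Fin.tail G) = G
      rw [← hT]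
      exact Fin.cons_self_tail G
    · have hw : (G 0).weight = (G 0).color [] + 4 + ∑ i, (f i).weight := by
        rw [hT, weight_mkNode]; rfl
      refine ⟨.inr ⟨⟨(G 0).color [], by omega⟩, ⟨Fin.addCases (Fin.tail G) f, ?_⟩⟩, ?_⟩
      · simp only
        rw [Fin.sum_univ_add]
        simp only [Fin.addCases_left, Fin.addCases_right]
        omega
      · refine Subtype.ext ?_
        show Fin.cons (mkNode ((G 0).color [])
            (fun i => Fin.addCases (Fin.tail G) f (Fin.natAdd m i)))
            (fun j => Fin.addCases (Fin.tail G) f (Fin.castAdd 5 j)) = G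
        have h1 : (fun i => (Fin.addCases (Fin.tail G) f : Fin (m + 5) → _) (Fin.natAdd m i)) = f :=
          funext fun i => Fin.addCases_right i
        have h2 : (fun j => (Fin.addCases (Fin.tail G) f : Fin (m + 5) → _) (Fin.castAdd 5 j))
            = Fin.tail G := funext fun j => Fin.addCases_left j
        rw [h1, h2, ← hT]
        exact Fin.cons_self_tail G

lemma card_sigma_fin {k : ℕ} (β : Fin k → Type) [∀ i, Finite (β i)] :
    Nat.card (Σ i, β i) = ∑ i, Nat.card (β i) := by
  letI : ∀ i, Fintype (β i) := fun i => Fintype.ofFinite _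
  simp [Nat.card_eq_fintype_card, Fintype.card_sigma]

lemma forest_count : ∀ n m : ℕ, Finite (Forest m n) ∧ ((Nat.card (Forest m n) : ℚ) = Rq m n) := by
  intro n
  induction n using Nat.strong_induction_on with
  | _ n ihn =>
    intro m
    induction m using Nat.strong_induction_on with
    | _ m ihm =>
      match m with
      | 0 =>
        have hall : ∀ F : Fin 0 → ColoredFiveTree, ∑ i, (F i).weight = 0 := by simp
        rcases Nat.eq_zero_or_pos n with rfl | hn
        · have e : Forest 0 0 ≃ (Fin 0 → ColoredFiveTree) :=
            Equiv.subtypeUnivEquiv hall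
          haveI : Unique (Fin 0 → ColoredFiveTree) := by infer_instance
          refine ⟨Finite.of_equiv _ e.symm, ?_⟩
          rw [Nat.card_congr e, Nat.card_unique]
          simp [Rq, Aq]
        · haveI : IsEmpty (Forest 0 n) := ⟨fun F => by
            have := F.prop
            rw [hall F.val] at this
            omega⟩
          refine ⟨Finite.of_fintype _, ?_⟩
          rw [Nat.card_of_isEmpty]
          rw [Rq, eq_comm, Nat.cast_zero]
          apply Finset.sum_eq_zero
          intro p hp
          rcases Nat.eq_zero_or_pos p with rfl | hp1
          · rw [show n + 0 + 0 - 1 = n - 1 by omega, show n - 4 * 0 = n by omega,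
              Nat.choose_eq_zero_of_lt (by omega), Nat.cast_zero, mul_zero]
          · rw [Aq, if_pos rfl, if_neg (by omega), zero_mul]
      | m + 1 =>
        have keyF : ∀ k, k ≤ n →
            Finite (Forest m k) ∧ ((Nat.card (Forest m k) : ℚ) = Rq m k) := by
          intro k hk
          rcases eq_or_lt_of_le hk with rfl | hlt
          · exact ihm m (by omega)
          · exact ihn k hlt m
        have keyF5 : ∀ c : Fin (n - 3),
            Finite (Forest (m + 5) (n - 4 - c)) ∧
              ((Nat.card (Forest (m + 5) (n - 4 - c)) : ℚ) = Rq (m + 5) (n - 4 - c)) := by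
          intro c
          have := c.isLt
          exact ihn (n - 4 - c) (by omega) (m + 5)
        haveI i1 : ∀ c : Fin (n + 1), Finite (Forest m (n - c)) :=
          fun c => (keyF (n - c) (by omega)).1
        haveI i2 : ∀ c : Fin (n - 3), Finite (Forest (m + 5) (n - 4 - c)) :=
          fun c => (keyF5 c).1
        haveI iD : Finite (Dec m n) := by
          unfold Dec
          infer_instance
        have e : Dec m n ≃ Forest (m + 1) n := Equiv.ofBijective _ (Phi_bijective m n)
        refine ⟨Finite.of_equiv _ e, ?_⟩
        rw [← Nat.card_congr e]
        have hcard : Nat.card (Dec m n) =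
            (∑ c : Fin (n + 1), Nat.card (Forest m (n - c))) +
              ∑ c : Fin (n - 3), Nat.card (Forest (m + 5) (n - 4 - c)) := by
          unfold Dec
          rw [Nat.card_sum, card_sigma_fin, card_sigma_fin]
        rw [hcard]
        push_cast
        rw [Rq_master]
        congr 1
        · rw [Fin.sum_univ_eq_sum_range (fun c => ((Nat.card (Forest m (n - c)) : ℚ)))]
          rw [← Finset.sum_range_reflect (fun k => Rq m k) (n + 1)]
          refine Finset.sum_congr rfl fun c hc => ?_
          simp only [Finset.mem_range] at hc
          rw [(keyF (n - c) (by omega)).2, show n + 1 - 1 - c = n - c by omega]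
        · rw [Fin.sum_univ_eq_sum_range (fun c => ((Nat.card (Forest (m + 5) (n - 4 - c)) : ℚ)))]
          rw [← Finset.sum_range_reflect (fun k => Rq (m + 5) k) (n - 3)]
          refine Finset.sum_congr rfl fun c hc => ?_
          simp only [Finset.mem_range] at hc
          rw [(keyF5 ⟨c, hc⟩).2, show n - 3 - 1 - c = n - 4 - c by omega]


/-- **Counting forests of colored 5-ary trees.** For all positive integers `m` and all
nonnegative integers `n`, the number of forests of `m` colored 5-ary trees of total
weight `n` equals `∑_{p=0}^{⌊n/4⌋} (m/(5p+m)) C(5p+m, p) C(n+p+m-1, n-4p)`. -/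
theorem card_forests_colored_five_ary_trees (m : ℕ) (hm : 0 < m) (n : ℕ) :
    (Nat.card {F : Fin m → ColoredFiveTree // ∑ i, (F i).weight = n} : ℚ) =
      ∑ p ∈ Finset.range (n / 4 + 1),
        (m : ℚ) / (5 * p + m) * ((5 * p + m).choose p) *
          ((n + p + m - 1).choose (n - 4 * p)) := by
  rw [show (Nat.card {F : Fin m → ColoredFiveTree // ∑ i, (F i).weight = n} : ℚ) = Rq m n from
    (forest_count n m).2, Rq]
  exact Finset.sum_congr rfl fun p _ => by rw [Aq, if_neg (by omega)]
end
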